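/- arXiv:1103.5151 — 4 statements merged into one kernel-verified Lean document; each statement's English description precedes it below -/
import Mathlib

section
/- The number of basic commutators of weight n on d generators is given by the Witt formula χ_n(d) = (1/n) · Σ_{m|n} μ(m) · d^{n/m}, where μ is the Möbius function. -/
/-- Formal commutators (bracket words) on a set `X` of generators. -/
inductive FormalComm (X : Type) : Type
  | of : X → FormalComm X
  | comm : FormalComm X → FormalComm X → FormalComm X

namespace FormalComm

/-- The weight of a formal commutator. -/
def weight {X : Type} : FormalComm X → ℕ
  | of _ => 1
  | comm b a => weight b + weight a

/-- Basic commutators with respect to a strict order `r` on formal commutators: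
generators are basic of weight 1; `[b,a]` is basic if `b`, `a` are basic, `a < b`,
and whenever `b = [b₁,b₂]` one has `b₂ ≤ a`. -/
inductive IsBasic {X : Type} (r : FormalComm X → FormalComm X → Prop) : FormalComm X → Prop
  | of (x : X) : IsBasic r (.of x)
  | comm (b a : FormalComm X) : IsBasic r b → IsBasic r a → r a b →
      (∀ b₁ b₂, b = .comm b₁ b₂ → ¬ r a b₂) → IsBasic r (.comm b a)

open scoped commutatorElement

/-- Evaluation of a formal commutator in the free group on `X`. -/
def eval {X : Type} : FormalComm X → FreeGroup X
  | of x => FreeGroup.of x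
  | comm b a => ⁅eval b, eval a⁆

end FormalComm

/-- The Witt number `χ_n(d) = (1/n) ∑_{m ∣ n} μ(m) d^{n/m}`. -/
def witt (n d : ℕ) : ℕ :=
  ((∑ m ∈ n.divisors, ArithmeticFunction.moebius m * (d : ℤ) ^ (n / m)) / (n : ℤ)).toNat


namespace WittAux

open FormalComm

/-! ### Generic helpers -/

lemma card_le_sum (s : Multiset ℕ) (h : ∀ i ∈ s, 1 ≤ i) : Multiset.card s ≤ s.sum := by
  induction s using Multiset.induction with
  | empty => simp
  | cons a s ih =>
    simp only [Multiset.card_cons, Multiset.sum_cons]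
    have ha := h a (Multiset.mem_cons_self a s)
    have := ih (fun i hi => h i (Multiset.mem_cons_of_mem hi))
    omega

lemma multiset_finite {γ : Type*} {S : Set γ} (hS : S.Finite) :
    ∀ n, {M : Multiset γ | (∀ x ∈ M, x ∈ S) ∧ Multiset.card M ≤ n}.Finite := by
  intro n
  induction n with
  | zero =>
    apply Set.Finite.subset (Set.finite_singleton (0 : Multiset γ))
    rintro M ⟨-, h⟩
    simp [Multiset.card_eq_zero.mp (Nat.le_zero.mp h)]
  | succ n ih =>
    apply Set.Finite.subset (Set.Finite.union (Set.finite_singleton (0 : Multiset γ))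
      (Set.Finite.image2 (· ::ₘ ·) hS ih))
    rintro M ⟨h1, h2⟩
    rcases Multiset.empty_or_exists_mem M with hM | ⟨a, ha⟩
    · left; simp [hM]
    · right
      obtain ⟨M', rfl⟩ := Multiset.exists_cons_of_mem ha
      refine Set.mem_image2_of_mem (h1 a (Multiset.mem_cons_self a M')) ⟨?_, ?_⟩
      · intro x hx; exact h1 x (Multiset.mem_cons_of_mem hx)
      · simpa using h2

lemma exists_rmin {β : Type*} (r : β → β → Prop) (hr : IsStrictTotalOrder β r)
    (s : Finset β) (hs : s.Nonempty) : ∃ m ∈ s, ∀ b ∈ s, b ≠ m → r m b := by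
  classical
  induction s using Finset.induction_on with
  | empty => exact absurd hs (by simp)
  | @insert a s ha ih =>
    rcases s.eq_empty_or_nonempty with rfl | hs'
    · exact ⟨a, by simp, by intro b hb hne; simp at hb; exact absurd hb hne⟩
    · obtain ⟨m, hm, hmin⟩ := ih hs'
      rcases (haveI := hr; trichotomous_of r a m) with h | h | h
      · refine ⟨a, Finset.mem_insert_self a s, ?_⟩
        intro b hb hne
        rcases Finset.mem_insert.mp hb with rfl | hb
        · exact absurd rfl hne
        · rcases eq_or_ne b m with rfl | hbm
          · exact h
          · exact hr.trans a m b h (hmin b hb hbm)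
      · subst h; exact absurd hm ha
      · refine ⟨m, Finset.mem_insert_of_mem hm, ?_⟩
        intro b hb hne
        rcases Finset.mem_insert.mp hb with rfl | hb
        · exact h
        · exact hmin b hb hne

lemma ncard_partition {γ : Type*} (s : Finset ℕ) (T : Set γ) (f : ℕ → Set γ)
    (hfin : ∀ i ∈ s, (f i).Finite)
    (hdisj : ∀ i ∈ s, ∀ j ∈ s, i ≠ j → Disjoint (f i) (f j))
    (hcov : T = ⋃ i ∈ s, f i) :
    T.ncard = ∑ i ∈ s, (f i).ncard := by
  classical
  subst hcov
  induction s using Finset.induction_on with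
  | empty => simp
  | @insert a s has ih =>
    rw [Finset.sum_insert has]
    have hT : (⋃ i ∈ insert a s, f i) = f a ∪ ⋃ i ∈ s, f i := by
      simp [Set.biUnion_insert]
    have hfinU : (⋃ i ∈ s, f i).Finite :=
      Set.Finite.biUnion s.finite_toSet (fun i hi => hfin i (Finset.mem_insert_of_mem hi))
    have hdisjU : Disjoint (f a) (⋃ i ∈ s, f i) := by
      rw [Set.disjoint_iUnion_right]
      intro i
      rw [Set.disjoint_iUnion_right]
      intro hi
      exact hdisj a (Finset.mem_insert_self a s) i (Finset.mem_insert_of_mem hi)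
        (fun h => has (h ▸ hi))
    rw [hT, Set.ncard_union_eq hdisjU (hfin a (Finset.mem_insert_self a s)) hfinU]
    rw [ih (fun i hi => hfin i (Finset.mem_insert_of_mem hi))
      (fun i hi j hj hij => hdisj i (Finset.mem_insert_of_mem hi) j (Finset.mem_insert_of_mem hj) hij)]

end WittAux

namespace WittAux

open FormalComm

variable {A : Type}

/-! ### Weighted trees -/

def wt (w : A → ℕ) : FormalComm A → ℕ
  | .of a => w a
  | .comm b a => wt w b + wt w a

lemma wt_pos {w : A → ℕ} (hw : ∀ a, 1 ≤ w a) : ∀ c, 1 ≤ wt w c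
  | .of a => hw a
  | .comm b a => le_trans (wt_pos hw b) (by simp [wt])

lemma wt_letter (w : A → ℕ) : ∀ c : FormalComm A, ∃ a : A, w a ≤ wt w c
  | .of a => ⟨a, le_refl _⟩
  | .comm b _ => by
    obtain ⟨a, ha⟩ := wt_letter w b
    exact ⟨a, le_trans ha (by simp [wt])⟩

lemma finite_wt_le {w : A → ℕ} (hw : ∀ a, 1 ≤ w a)
    (hfin : ∀ n, {a : A | w a ≤ n}.Finite) :
    ∀ n, {c : FormalComm A | wt w c ≤ n}.Finite := by
  intro n
  induction n with
  | zero =>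
    apply Set.Finite.subset (Set.finite_empty)
    intro c hc
    exact absurd (le_trans (wt_pos hw c) hc) (by simp)
  | succ n ih =>
    apply Set.Finite.subset (Set.Finite.union ((hfin (n+1)).image FormalComm.of)
      (Set.Finite.image2 FormalComm.comm ih ih))
    intro c hc
    match c with
    | .of a => exact Or.inl ⟨a, hc, rfl⟩
    | .comm b a =>
      right
      have hb := wt_pos hw b
      have ha := wt_pos hw a
      have hc' : wt w b + wt w a ≤ n + 1 := hc
      exact Set.mem_image2_of_mem (show wt w b ≤ n by omega) (show wt w a ≤ n by omega)

/-- The set of multisets of basic commutators of total weight `n`. -/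
def Mset (w : A → ℕ) (r : FormalComm A → FormalComm A → Prop) (n : ℕ) :
    Set (Multiset (FormalComm A)) :=
  {M | (∀ c ∈ M, IsBasic r c) ∧ (M.map (wt w)).sum = n}

lemma Mset_finite {w : A → ℕ} {r : FormalComm A → FormalComm A → Prop}
    (hw : ∀ a, 1 ≤ w a) (hfin : ∀ n, {a : A | w a ≤ n}.Finite) (n : ℕ) :
    (Mset w r n).Finite := by
  apply Set.Finite.subset (multiset_finite (finite_wt_le hw hfin n) n)
  rintro M ⟨hb, hs⟩
  constructor
  · intro c hc
    have : wt w c ≤ (M.map (wt w)).sum :=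
      Multiset.le_sum_of_mem (Multiset.mem_map_of_mem _ hc)
    simp only [Set.mem_setOf_eq]; omega
  · have : Multiset.card (M.map (wt w)) ≤ (M.map (wt w)).sum := by
      apply card_le_sum
      intro i hi
      obtain ⟨c, _, rfl⟩ := Multiset.mem_map.mp hi
      exact wt_pos hw c
    simpa [hs] using this

lemma Mset_zero {w : A → ℕ} {r : FormalComm A → FormalComm A → Prop}
    (hw : ∀ a, 1 ≤ w a) : Mset w r 0 = {0} := by
  ext M
  simp only [Mset, Set.mem_setOf_eq, Set.mem_singleton_iff]
  constructor
  · rintro ⟨-, hs⟩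
    by_contra hM
    obtain ⟨c, hc⟩ := Multiset.exists_mem_of_ne_zero hM
    have h1 : wt w c ≤ (M.map (wt w)).sum :=
      Multiset.le_sum_of_mem (Multiset.mem_map_of_mem _ hc)
    have := wt_pos hw c
    omega
  · rintro rfl; exact ⟨by simp, by simp⟩

lemma count_wt_le_sum {w : A → ℕ} (M : Multiset (FormalComm A)) (c : FormalComm A) (j : ℕ)
    [DecidableEq (FormalComm A)] (hj : j ≤ M.count c) :
    j * wt w c ≤ (M.map (wt w)).sum := by
  have hle : Multiset.replicate j c ≤ M := Multiset.le_count_iff_replicate_le.mp hj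
  obtain ⟨u, rfl⟩ := Multiset.le_iff_exists_add.mp hle
  simp [Multiset.sum_replicate]

/-! ### The numeric count of words -/

/-- Numerically defined count of "words": sequences of letters of total weight `n`. -/
noncomputable def Wnum (w : A → ℕ) (hw : ∀ a, 1 ≤ w a)
    (hfin : ∀ n, {a : A | w a ≤ n}.Finite) : ℕ → ℕ
  | 0 => 1
  | (n+1) => ∑ a ∈ (hfin (n+1)).toFinset, Wnum w hw hfin (n + 1 - w a)
  decreasing_by exact Nat.sub_lt (Nat.succ_pos n) (hw a)

lemma Wnum_zero (w : A → ℕ) (hw : ∀ a, 1 ≤ w a)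
    (hfin : ∀ n, {a : A | w a ≤ n}.Finite) : Wnum w hw hfin 0 = 1 := by
  simp [Wnum]

lemma Wnum_succ (w : A → ℕ) (hw : ∀ a, 1 ≤ w a)
    (hfin : ∀ n, {a : A | w a ≤ n}.Finite) (n : ℕ) :
    Wnum w hw hfin (n+1) = ∑ a ∈ (hfin (n+1)).toFinset, Wnum w hw hfin (n + 1 - w a) := by
  rw [Wnum]

end WittAux

namespace WittAux

open FormalComm

variable {A : Type}

/-! ### Lazard elimination -/

/-- New alphabet after eliminating the letter `x`. -/
def ElimA (x : A) : Type := {y : A // y ≠ x} × ℕ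

/-- Weight function on the new alphabet. -/
def elimW (w : A → ℕ) (x : A) : ElimA x → ℕ := fun p => w p.1.1 + p.2 * w x

/-- Left-iterated commutator `[...[[y,x],x],...,x]`. -/
def TC (x y : A) : ℕ → FormalComm A
  | 0 => .of y
  | k+1 => .comm (TC x y k) (.of x)

/-- Interpretation of trees on the new alphabet as trees on the old one. -/
def emb (x : A) : FormalComm (ElimA x) → FormalComm A
  | .of p => TC x p.1.1 p.2
  | .comm b a => .comm (emb x b) (emb x a)

def elimR (r : FormalComm A → FormalComm A → Prop) (x : A) :
    FormalComm (ElimA x) → FormalComm (ElimA x) → Prop :=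
  fun u v => r (emb x u) (emb x v)

lemma wt_TC (w : A → ℕ) (x y : A) : ∀ k, wt w (TC x y k) = w y + k * w x
  | 0 => by simp [TC, wt]
  | (k+1) => by
    show wt w (TC x y k) + w x = _
    rw [wt_TC w x y k]; ring

lemma wt_emb (w : A → ℕ) (x : A) : ∀ c, wt w (emb x c) = wt (elimW w x) c
  | .of p => by simp [emb, wt_TC, wt, elimW]
  | .comm b a => by
    show wt w (emb x b) + wt w (emb x a) = wt (elimW w x) b + wt (elimW w x) a
    rw [wt_emb w x b, wt_emb w x a]

lemma TC_ne_of_x {x y : A} (hy : y ≠ x) : ∀ k, TC x y k ≠ .of x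
  | 0 => by simp [TC, hy]
  | (k+1) => by simp [TC]

lemma emb_ne_of_x (x : A) : ∀ c, emb x c ≠ .of x
  | .of p => TC_ne_of_x p.1.2 p.2
  | .comm b a => by simp [emb]

lemma TC_inj {x : A} : ∀ {k k' : ℕ} {y y' : A}, TC x y k = TC x y' k' → y = y' ∧ k = k' := by
  intro k
  induction k with
  | zero =>
    intro k' y y' h
    cases k' with
    | zero => simpa [TC] using h
    | succ k' => simp [TC] at h
  | succ k ih =>
    intro k' y y' h
    cases k' with
    | zero => simp [TC] at h
    | succ k' =>
      simp only [TC, FormalComm.comm.injEq] at h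
      obtain ⟨h1, -⟩ := h
      obtain ⟨hy, hk⟩ := ih h1
      exact ⟨hy, by omega⟩

lemma emb_inj (x : A) : Function.Injective (emb x) := by
  intro c
  induction c with
  | of p =>
    intro c' h
    cases c' with
    | of p' =>
      simp only [emb] at h
      obtain ⟨h1, h2⟩ := TC_inj h
      obtain ⟨⟨y, hy⟩, k⟩ := p
      obtain ⟨⟨y', hy'⟩, k'⟩ := p'
      simp only at h1 h2
      subst h1; subst h2; rfl
    | comm b a =>
      exfalso
      simp only [emb] at h
      rcases p with ⟨⟨y, hy⟩, k⟩
      cases k with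
      | zero => simp [TC] at h
      | succ k =>
        simp only [TC, FormalComm.comm.injEq] at h
        exact emb_ne_of_x x a h.2.symm
  | comm b a ihb iha =>
    intro c' h
    cases c' with
    | of p' =>
      exfalso
      simp only [emb] at h
      rcases p' with ⟨⟨y, hy⟩, k⟩
      cases k with
      | zero => simp [TC] at h
      | succ k =>
        simp only [TC, FormalComm.comm.injEq] at h
        exact emb_ne_of_x x a h.2
    | comm b' a' =>
      simp only [emb, FormalComm.comm.injEq] at h ⊢
      exact ⟨ihb h.1, iha h.2⟩

section WithOrder

variable {w : A → ℕ} {r : FormalComm A → FormalComm A → Prop} {x : A}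

lemma r_asymm (hr : IsStrictTotalOrder (FormalComm A) r) {a b : FormalComm A}
    (h : r a b) : ¬ r b a := fun h' => hr.irrefl a (hr.trans a b a h h')

lemma TC_basic (hr : IsStrictTotalOrder (FormalComm A) r)
    (hmin : ∀ c : FormalComm A, c ≠ .of x → r (.of x) c)
    (y : A) (hy : y ≠ x) : ∀ k, IsBasic r (TC x y k)
  | 0 => IsBasic.of y
  | (k+1) => by
    refine IsBasic.comm (TC x y k) (.of x) (TC_basic hr hmin y hy k) (IsBasic.of x)
      (hmin _ (TC_ne_of_x hy k)) ?_
    intro b1 b2 heq hr2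
    cases k with
    | zero => simp [TC] at heq
    | succ k =>
      simp only [TC, FormalComm.comm.injEq] at heq
      exact hr.irrefl _ (heq.2 ▸ hr2)

lemma basic_emb (hr : IsStrictTotalOrder (FormalComm A) r)
    (hmin : ∀ c : FormalComm A, c ≠ .of x → r (.of x) c)
    (c : FormalComm (ElimA x)) (hc : IsBasic (elimR r x) c) : IsBasic r (emb x c) := by
  induction hc with
  | of p => exact TC_basic hr hmin p.1.1 p.1.2 p.2
  | comm b a hb ha hab hcond ihb iha =>
    refine IsBasic.comm (emb x b) (emb x a) ihb iha hab ?_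
    intro b1 b2 heq hra
    cases b with
    | of p =>
      rcases p with ⟨⟨y, hy⟩, k⟩
      cases k with
      | zero => simp [emb, TC] at heq
      | succ k =>
        simp only [emb, TC, FormalComm.comm.injEq] at heq
        have : r (.of x) (emb x a) := hmin _ (emb_ne_of_x x a)
        exact r_asymm hr this (heq.2 ▸ hra)
    | comm b1' b2' =>
      simp only [emb, FormalComm.comm.injEq] at heq
      refine hcond b1' b2' rfl ?_
      show r (emb x a) (emb x b2')
      rw [heq.2]; exact hra

lemma Tform (hr : IsStrictTotalOrder (FormalComm A) r)
    (hmin : ∀ c : FormalComm A, c ≠ .of x → r (.of x) c) :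
    ∀ b : FormalComm A, IsBasic r (.comm b (.of x)) → ∃ y k, ∃ (hy : y ≠ x), b = TC x y k := by
  intro b
  induction b with
  | of y =>
    intro h
    cases h with
    | comm _ _ hb ha hab hcond =>
      have hy : y ≠ x := by
        rintro rfl
        exact hr.irrefl _ hab
      exact ⟨y, 0, hy, rfl⟩
  | comm b1 b2 ih1 ih2 =>
    intro h
    cases h with
    | comm _ _ hb ha hab hcond =>
      have hb2 : b2 = .of x := by
        by_contra hne
        exact hcond b1 b2 rfl (hmin b2 hne)
      subst hb2
      obtain ⟨y, k, hy, rfl⟩ := ih1 hb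
      exact ⟨y, k+1, hy, rfl⟩

lemma emb_surj (hr : IsStrictTotalOrder (FormalComm A) r)
    (hmin : ∀ c : FormalComm A, c ≠ .of x → r (.of x) c)
    (c : FormalComm A) (hc : IsBasic r c) (hne : c ≠ .of x) :
    ∃ c', emb x c' = c ∧ IsBasic (elimR r x) c' := by
  induction hc with
  | of y =>
    have hy : y ≠ x := fun h => hne (by rw [h])
    exact ⟨.of ⟨⟨y, hy⟩, 0⟩, rfl, IsBasic.of _⟩
  | comm b a hb ha hab hcond ihb iha =>
    by_cases hax : a = .of x
    · subst hax
      have hbasic : IsBasic r (.comm b (.of x)) := IsBasic.comm b _ hb ha hab hcond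
      obtain ⟨y, k, hy, rfl⟩ := Tform hr hmin b hbasic
      exact ⟨.of ⟨⟨y, hy⟩, k+1⟩, rfl, IsBasic.of _⟩
    · obtain ⟨a', haeq, ha'⟩ := iha hax
      have hbx : b ≠ .of x := by
        rintro rfl
        exact r_asymm hr (hmin a hax) hab
      obtain ⟨b', hbeq, hb'⟩ := ihb hbx
      refine ⟨.comm b' a', by simp [emb, haeq, hbeq], ?_⟩
      refine IsBasic.comm b' a' hb' ha' ?_ ?_
      · show r (emb x a') (emb x b')
        rw [haeq, hbeq]; exact hab
      · intro c1 c2 heq hra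
        subst heq
        refine hcond (emb x c1) (emb x c2) ?_ ?_
        · rw [← hbeq]; rfl
        · show r a (emb x c2)
          rw [← haeq]; exact hra

/-- The induced order on the new alphabet's trees is a strict total order. -/
lemma elimR_sto (hr : IsStrictTotalOrder (FormalComm A) r) :
    IsStrictTotalOrder (FormalComm (ElimA x)) (elimR r x) where
  trichotomous u v h1 h2 := emb_inj x (hr.trichotomous _ _ h1 h2)
  irrefl u := hr.irrefl (emb x u)
  trans u v t h1 h2 := hr.trans _ _ _ h1 h2

lemma elimW_pos (hw : ∀ a, 1 ≤ w a) : ∀ p : ElimA x, 1 ≤ elimW w x p := by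
  rintro ⟨⟨y, hy⟩, k⟩
  have := hw y
  simp only [elimW]
  omega

lemma elimW_fin (hw : ∀ a, 1 ≤ w a) (hfin : ∀ n, {a : A | w a ≤ n}.Finite) :
    ∀ n, {p : ElimA x | elimW w x p ≤ n}.Finite := by
  intro n
  have himg : (fun p : ElimA x => ((p.1 : A), p.2)) '' {p | elimW w x p ≤ n}
      ⊆ {a : A | w a ≤ n} ×ˢ Set.Iic n := by
    rintro ⟨a, k⟩ ⟨⟨⟨y, hy⟩, k'⟩, hp, heq⟩
    simp only [Prod.mk.injEq] at heq
    obtain ⟨rfl, rfl⟩ := heq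
    replace hp : w y + k' * w x ≤ n := hp
    have h1 : k' ≤ k' * w x := Nat.le_mul_of_pos_right k' (hw x)
    exact ⟨by simp only [Set.mem_setOf_eq]; omega, by simp only [Set.mem_Iic]; omega⟩
  apply Set.Finite.of_finite_image (Set.Finite.subset (Set.Finite.prod (hfin n) (Set.finite_Iic n)) himg)
  rintro ⟨⟨y, hy⟩, k⟩ - ⟨⟨y', hy'⟩, k'⟩ - heq
  simp only [Prod.mk.injEq] at heq
  obtain ⟨rfl, rfl⟩ := heq.imp id id
  rfl

lemma elimR_wt (hwt : ∀ a b : FormalComm A, wt w a < wt w b → r a b) :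
    ∀ u v : FormalComm (ElimA x), wt (elimW w x) u < wt (elimW w x) v → elimR r x u v := by
  intro u v h
  exact hwt _ _ (by rw [wt_emb w x u, wt_emb w x v]; exact h)

end WithOrder

end WittAux

namespace WittAux

open FormalComm

variable {A : Type}

section CountElim

variable {w : A → ℕ} {r : FormalComm A → FormalComm A → Prop} {x : A}

def letter_of_tree {B : Type} : FormalComm B → B
  | .of b => b
  | .comm u _ => letter_of_tree u

lemma Mset_empty_alphabet {B : Type} (hB : ¬ Nonempty B)
    (w' : B → ℕ) (r' : FormalComm B → FormalComm B → Prop) (k : ℕ) :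
    (Mset w' r' k).ncard = if k = 0 then 1 else 0 := by
  have hero : ∀ M : Multiset (FormalComm B), M ∈ Mset w' r' k → M = 0 := by
    intro M hM
    rcases Multiset.empty_or_exists_mem M with h | ⟨c, hc⟩
    · exact h
    · exact absurd ⟨letter_of_tree c⟩ hB
  rcases Nat.eq_zero_or_pos k with rfl | hk
  · rw [if_pos rfl]
    have : Mset w' r' 0 = {0} := by
      ext M
      constructor
      · intro hM
        exact hero M hM
      · rintro rfl
        exact ⟨by simp, by simp⟩
    rw [this]
    exact Set.ncard_singleton 0
  · rw [if_neg (by omega)]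
    have : Mset w' r' k = ∅ := by
      ext M
      simp only [Set.mem_empty_iff_false, iff_false]
      intro hM
      have h0 := hero M hM
      subst h0
      have := hM.2
      simp at this
      omega
    rw [this]
    simp

lemma Mset_elim (hw : ∀ a, 1 ≤ w a) (hfin : ∀ n, {a : A | w a ≤ n}.Finite)
    (hr : IsStrictTotalOrder (FormalComm A) r)
    (hmin : ∀ c : FormalComm A, c ≠ .of x → r (FormalComm.of x) c) (n : ℕ) :
    (Mset w r n).ncard
      = ∑ m ∈ (Finset.range (n+1)).filter (fun m => m * w x ≤ n),
          (Mset (elimW w x) (elimR r x) (n - m * w x)).ncard := by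
  classical
  set S : ℕ → Set (Multiset (FormalComm A)) :=
    fun m => {M | M ∈ Mset w r n ∧ M.count (FormalComm.of x) = m} with hSdef
  have hSsub : ∀ m, S m ⊆ Mset w r n := fun m M hM => hM.1
  have key : ∀ m, m * w x ≤ n →
      (S m).ncard = (Mset (elimW w x) (elimR r x) (n - m * w x)).ncard := by
    intro m hmn
    by_cases hNE : Nonempty (FormalComm (ElimA x))
    case neg =>
      -- the new alphabet carries no trees at all
      have hBempty : ¬ Nonempty (ElimA x) := fun ⟨b⟩ => hNE ⟨.of b⟩
      rw [Mset_empty_alphabet hBempty (elimW w x) (elimR r x) (n - m * w x)]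
      have hS : S m = if n - m * w x = 0 then {Multiset.replicate m (FormalComm.of x)} else ∅ := by
        ext M
        constructor
        · rintro ⟨⟨hbas, hsum⟩, hcount⟩
          have hM : M = Multiset.replicate m (FormalComm.of x) := by
            have : ∀ e ∈ M, e = FormalComm.of x := by
              intro e he
              by_contra hne
              obtain ⟨c', -, -⟩ := emb_surj hr hmin e (hbas e he) hne
              exact hNE ⟨c'⟩
            rw [Multiset.eq_replicate]
            refine ⟨?_, this⟩
            rw [← hcount]
            rw [show M.count (FormalComm.of x) = Multiset.card M from ?_]
            · rw [Multiset.count_eq_card]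
              exact fun a ha => (this a ha).symm
          subst hM
          have hsum' : m * w x = n := by
            simpa [Multiset.sum_replicate, wt] using hsum
          simp [hsum']
        · intro hM
          by_cases h0 : n - m * w x = 0
          · rw [if_pos h0, Set.mem_singleton_iff] at hM
            subst hM
            have hn : m * w x = n := by omega
            refine ⟨⟨fun c hc => ?_, ?_⟩, ?_⟩
            · rw [Multiset.eq_of_mem_replicate hc]; exact IsBasic.of x
            · simp [Multiset.sum_replicate, wt, hn]
            · simp
          · rw [if_neg h0] at hM
            exact absurd hM (Set.notMem_empty M)
      rw [hS]
      by_cases h0 : n - m * w x = 0 <;> simp [h0]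
    case pos =>
    set σ : FormalComm A → FormalComm (ElimA x) := Function.invFun (emb x) with hσdef
    have hσ : ∀ c', σ (emb x c') = c' := fun c' => Function.leftInverse_invFun (emb_inj x) c'
    set f : Multiset (FormalComm A) → Multiset (FormalComm (ElimA x)) :=
      fun M => (M - Multiset.replicate m (FormalComm.of x)).map σ with hfdef
    set g : Multiset (FormalComm (ElimA x)) → Multiset (FormalComm A) :=
      fun M' => M'.map (emb x) + Multiset.replicate m (FormalComm.of x) with hgdef
    have main : ∀ M ∈ S m,
        f M ∈ Mset (elimW w x) (elimR r x) (n - m * w x) ∧ g (f M) = M := by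
      rintro M ⟨⟨hbas, hsum⟩, hcount⟩
      have hrep : Multiset.replicate m (FormalComm.of x) ≤ M :=
        Multiset.le_count_iff_replicate_le.mp (le_of_eq hcount.symm)
      set N := M - Multiset.replicate m (FormalComm.of x) with hNdef
      have hMN : N + Multiset.replicate m (FormalComm.of x) = M := tsub_add_cancel_of_le hrep
      have hNmem : ∀ e ∈ N, e ∈ M := fun e he => Multiset.mem_of_le tsub_le_self he
      have hNx : ∀ e ∈ N, e ≠ .of x := by
        intro e he heq
        have h0 : N.count (FormalComm.of x) = 0 := by
          rw [hNdef, Multiset.count_sub, hcount, Multiset.count_replicate_self]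
          omega
        rw [← heq] at h0
        exact absurd (Multiset.count_eq_zero.mp h0) (by simp [he])
      have hNsurj : ∀ e ∈ N, emb x (σ e) = e ∧ IsBasic (elimR r x) (σ e) := by
        intro e he
        obtain ⟨c', hc'e, hc'⟩ := emb_surj hr hmin e (hbas e (hNmem e he)) (hNx e he)
        rw [← hc'e, hσ]
        exact ⟨rfl, hc'⟩
      have hsumN : (N.map (wt w)).sum + m * w x = n := by
        have h1 : ((N + Multiset.replicate m (FormalComm.of x)).map (wt w)).sum = n := by
          rw [hMN, hsum]
        simpa [Multiset.sum_replicate, wt] using h1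
      have hmapwt : Multiset.map (wt (elimW w x) ∘ σ) N = Multiset.map (wt w) N :=
        Multiset.map_congr rfl (fun e he => by
          show wt (elimW w x) (σ e) = wt w e
          rw [← wt_emb w x (σ e), (hNsurj e he).1])
      have hmapid : Multiset.map (emb x ∘ σ) N = N := by
        rw [show Multiset.map (emb x ∘ σ) N = Multiset.map id N from
          Multiset.map_congr rfl (fun e he => (hNsurj e he).1), Multiset.map_id]
      constructor
      · constructor
        · intro u hu
          obtain ⟨e, he, rfl⟩ := Multiset.mem_map.mp hu
          exact (hNsurj e he).2
        · show ((N.map σ).map (wt (elimW w x))).sum = n - m * w x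
          rw [Multiset.map_map, hmapwt]
          omega
      · show (N.map σ).map (emb x) + Multiset.replicate m (FormalComm.of x) = M
        rw [Multiset.map_map, hmapid, hMN]
    have main' : ∀ M' ∈ Mset (elimW w x) (elimR r x) (n - m * w x),
        g M' ∈ S m ∧ f (g M') = M' := by
      rintro M' ⟨hbas', hsum'⟩
      have hmapwt' : Multiset.map (wt w ∘ emb x) M' = Multiset.map (wt (elimW w x)) M' :=
        Multiset.map_congr rfl (fun c' _ => wt_emb w x c')
      have hmapid' : Multiset.map (σ ∘ emb x) M' = M' := by
        rw [show Multiset.map (σ ∘ emb x) M' = Multiset.map id M' from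
          Multiset.map_congr rfl (fun c' _ => hσ c'), Multiset.map_id]
      constructor
      · refine ⟨⟨?_, ?_⟩, ?_⟩
        · intro c hc
          simp only [hgdef, Multiset.mem_add] at hc
          rcases hc with hc | hc
          · obtain ⟨c', hc', rfl⟩ := Multiset.mem_map.mp hc
            exact basic_emb hr hmin c' (hbas' c' hc')
          · rw [Multiset.eq_of_mem_replicate hc]
            exact IsBasic.of x
        · show ((M'.map (emb x) + Multiset.replicate m (FormalComm.of x)).map (wt w)).sum = n
          rw [Multiset.map_add, Multiset.sum_add, Multiset.map_map, hmapwt', hsum',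
            Multiset.map_replicate, Multiset.sum_replicate]
          show n - m * w x + m • wt w (FormalComm.of x) = n
          simp only [smul_eq_mul]
          show n - m * w x + m * w x = n
          omega
        · show (M'.map (emb x) + Multiset.replicate m (FormalComm.of x)).count (FormalComm.of x) = m
          rw [Multiset.count_add, Multiset.count_replicate_self]
          have : (M'.map (emb x)).count (FormalComm.of x) = 0 := by
            rw [Multiset.count_eq_zero]
            intro hmem
            obtain ⟨c', -, heq⟩ := Multiset.mem_map.mp hmem
            exact emb_ne_of_x x c' heq
          omega
      · show ((M'.map (emb x) + Multiset.replicate m (FormalComm.of x)) - Multiset.replicate m (FormalComm.of x)).map σ = M'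
        rw [add_tsub_cancel_right, Multiset.map_map, hmapid']
    have himg : f '' S m = Mset (elimW w x) (elimR r x) (n - m * w x) := by
      apply Set.eq_of_subset_of_subset
      · rintro _ ⟨M, hM, rfl⟩; exact (main M hM).1
      · intro M' hM'
        exact ⟨g M', (main' M' hM').1, (main' M' hM').2⟩
    rw [← himg, Set.ncard_image_of_injOn]
    intro M1 h1 M2 h2 heq
    rw [← (main M1 h1).2, ← (main M2 h2).2, heq]
  rw [ncard_partition _ _ S]
  · apply Finset.sum_congr rfl
    intro m hm
    exact key m (Finset.mem_filter.mp hm).2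
  · intro m hm
    exact Set.Finite.subset (Mset_finite hw hfin n) (hSsub m)
  · intro i _ j _ hij
    rw [Set.disjoint_left]
    rintro M ⟨-, hMi⟩ ⟨-, hMj⟩
    exact hij (hMi ▸ hMj ▸ rfl)
  · ext M
    simp only [Set.mem_iUnion, Finset.mem_filter, Finset.mem_range]
    constructor
    · intro hM
      have h1 : M.count (FormalComm.of x) * w x ≤ (M.map (wt w)).sum :=
        count_wt_le_sum M (FormalComm.of x) _ le_rfl
      rw [hM.2] at h1
      have h2 : M.count (FormalComm.of x) ≤ M.count (FormalComm.of x) * w x :=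
        Nat.le_mul_of_pos_right _ (hw x)
      exact ⟨M.count (FormalComm.of x), ⟨by omega, h1⟩, hM, rfl⟩
    · rintro ⟨m, -, hM, -⟩
      exact hM

end CountElim

end WittAux

namespace WittAux

open FormalComm

variable {A : Type}

section WnumElim

attribute [local instance] Classical.propDecidable

variable {w : A → ℕ} {x : A}

/-- Auxiliary sum used in the numeric elimination identity. -/
noncomputable def Vfun (w : A → ℕ) (x : A) (hw' : ∀ p : ElimA x, 1 ≤ elimW w x p)
    (hfin' : ∀ n, {p : ElimA x | elimW w x p ≤ n}.Finite) (K : ℕ) : ℕ :=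
  ∑ m ∈ (Finset.range (K+1)).filter (fun m => m * w x ≤ K),
    Wnum (elimW w x) hw' hfin' (K - m * w x)

lemma Vfun_split (hw : ∀ a, 1 ≤ w a) (hw' : ∀ p : ElimA x, 1 ≤ elimW w x p)
    (hfin' : ∀ n, {p : ElimA x | elimW w x p ≤ n}.Finite) (K : ℕ) :
    Vfun w x hw' hfin' K = Wnum (elimW w x) hw' hfin' K
      + (if w x ≤ K then Vfun w x hw' hfin' (K - w x) else 0) := by
  classical
  have h0 : (0 : ℕ) ∈ (Finset.range (K+1)).filter (fun m => m * w x ≤ K) := by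
    simp
  rw [Vfun, ← Finset.sum_erase_add _ _ h0]
  simp only [Nat.zero_mul, Nat.sub_zero]
  rw [add_comm]
  congr 1
  by_cases hxK : w x ≤ K
  · rw [if_pos hxK, Vfun]
    refine Finset.sum_bij' (fun m _ => m - 1) (fun m' _ => m' + 1) ?_ ?_ ?_ ?_ ?_
    · intro m hm
      simp only [Finset.mem_erase, Finset.mem_filter, Finset.mem_range] at hm
      obtain ⟨hne, hmK, hmwx⟩ := hm
      have hwx := hw x
      have h2 : 1 ≤ m := by omega
      have hsucc : m * w x = (m-1) * w x + w x := by
        nth_rewrite 1 [show m = (m-1)+1 by omega]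
        ring
      have hle : m - 1 ≤ (m-1) * w x := Nat.le_mul_of_pos_right _ hwx
      simp only [Finset.mem_filter, Finset.mem_range]
      omega
    · intro m' hm'
      simp only [Finset.mem_filter, Finset.mem_range] at hm'
      have hwx := hw x
      have hsucc : (m'+1) * w x = m' * w x + w x := by ring
      have hle : m' + 1 ≤ (m'+1) * w x := Nat.le_mul_of_pos_right _ hwx
      simp only [Finset.mem_erase, Finset.mem_filter, Finset.mem_range]
      omega
    · intro m hm
      simp only [Finset.mem_erase, Finset.mem_filter, Finset.mem_range] at hm
      show m - 1 + 1 = m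
      omega
    · intro m' _
      show m' + 1 - 1 = m'
      omega
    · intro m hm
      simp only [Finset.mem_erase, Finset.mem_filter, Finset.mem_range] at hm
      have hwx := hw x
      have h2 : 1 ≤ m := by omega
      have hsucc : m * w x = (m-1) * w x + w x := by
        nth_rewrite 1 [show m = (m-1)+1 by omega]
        ring
      show Wnum (elimW w x) hw' hfin' (K - m * w x)
        = Wnum (elimW w x) hw' hfin' (K - w x - (m - 1) * w x)
      congr 1
      omega
  · rw [if_neg hxK]
    apply Finset.sum_eq_zero
    intro m hm
    exfalso
    simp only [Finset.mem_erase, Finset.mem_filter, Finset.mem_range] at hm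
    have hwx := hw x
    have h2 : 1 ≤ m := by omega
    have : w x ≤ m * w x := by
      calc w x = 1 * w x := by ring
      _ ≤ m * w x := Nat.mul_le_mul_right _ h2
    omega

lemma elim_letters_sum (hw : ∀ a, 1 ≤ w a) (hfin : ∀ n, {a : A | w a ≤ n}.Finite)
    (hfin' : ∀ n, {p : ElimA x | elimW w x p ≤ n}.Finite) (n : ℕ) (F : ℕ → ℕ) :
    ∑ p ∈ (hfin' (n+1)).toFinset, F (n + 1 - elimW w x p)
      = ∑ q ∈ ((hfin (n+1)).toFinset.erase x).sigma
          (fun y => (Finset.range (n+2)).filter (fun k => k * w x ≤ n + 1 - w y)),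
          F (n + 1 - w q.1 - q.2 * w x) := by
  refine Finset.sum_bij' (fun p _ => (⟨p.1.1, p.2⟩ : Σ _ : A, ℕ))
    (fun q hq => ((⟨q.1, ?_⟩, q.2) : ElimA x)) ?_ ?_ ?_ ?_ ?_
  · simp only [Finset.mem_sigma, Finset.mem_erase] at hq
    exact hq.1.1
  · rintro ⟨⟨y, hy⟩, k⟩ hp
    replace hp : w y + k * w x ≤ n + 1 := by have h := (hfin' (n+1)).mem_toFinset.mp hp; exact h
    have hwx := hw x
    have hky : k ≤ k * w x := Nat.le_mul_of_pos_right _ hwx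
    simp only [Finset.mem_sigma, Finset.mem_erase, Finset.mem_filter,
      Finset.mem_range, Set.Finite.mem_toFinset, Set.mem_setOf_eq]
    exact ⟨⟨hy, by omega⟩, by omega, by omega⟩
  · rintro ⟨y, k⟩ hq
    simp only [Finset.mem_sigma, Finset.mem_erase, Finset.mem_filter,
      Finset.mem_range, Set.Finite.mem_toFinset, Set.mem_setOf_eq] at hq
    refine (Set.Finite.mem_toFinset _).mpr ?_; show w y + k * w x ≤ n + 1
    obtain ⟨⟨hy, hyle⟩, hk, hkle⟩ := hq
    omega
  · rintro ⟨⟨y, hy⟩, k⟩ _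
    rfl
  · rintro ⟨y, k⟩ _
    rfl
  · rintro ⟨⟨y, hy⟩, k⟩ _
    simp only [elimW]
    congr 1
    omega

lemma Vfun_inner (hw : ∀ a, 1 ≤ w a) (hw' : ∀ p : ElimA x, 1 ≤ elimW w x p)
    (hfin' : ∀ n, {p : ElimA x | elimW w x p ≤ n}.Finite) (n : ℕ) {y : A} (hy : w y ≤ n + 1) :
    Vfun w x hw' hfin' (n + 1 - w y)
      = ∑ k ∈ (Finset.range (n+2)).filter (fun k => k * w x ≤ n + 1 - w y),
          Wnum (elimW w x) hw' hfin' (n + 1 - w y - k * w x) := by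
  classical
  rw [Vfun]
  apply Finset.sum_congr
  · ext k
    simp only [Finset.mem_filter, Finset.mem_range]
    have hwx := hw x
    have hky : k ≤ k * w x := Nat.le_mul_of_pos_right _ hwx
    omega
  · intro k _
    rfl

lemma Wnum_elim (hw : ∀ a, 1 ≤ w a) (hfin : ∀ n, {a : A | w a ≤ n}.Finite)
    (hw' : ∀ p : ElimA x, 1 ≤ elimW w x p)
    (hfin' : ∀ n, {p : ElimA x | elimW w x p ≤ n}.Finite) :
    ∀ n, Wnum w hw hfin n = Vfun w x hw' hfin' n := by
  classical
  intro n
  induction n using Nat.strong_induction_on with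
  | _ n ih =>
    match n with
    | 0 =>
      rw [Wnum_zero, Vfun]
      rw [show (Finset.range (0+1)).filter (fun m => m * w x ≤ 0) = {0} by
        ext m
        simp only [Finset.mem_filter, Finset.mem_range, Finset.mem_singleton]
        constructor
        · rintro ⟨h, -⟩; omega
        · rintro rfl; simp]
      simp [Wnum_zero]
    | (n+1) =>
      rw [Wnum_succ]
      have hih : ∀ a ∈ (hfin (n+1)).toFinset,
          Wnum w hw hfin (n + 1 - w a) = Vfun w x hw' hfin' (n + 1 - w a) := by
        intro a _
        exact ih _ (Nat.sub_lt (Nat.succ_pos n) (hw a))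
      rw [Finset.sum_congr rfl hih]
      rw [Vfun_split hw hw' hfin']
      have hmain : ∑ y ∈ (hfin (n+1)).toFinset.erase x, Vfun w x hw' hfin' (n + 1 - w y)
          = Wnum (elimW w x) hw' hfin' (n+1) := by
        rw [Wnum_succ, elim_letters_sum hw hfin hfin' n, Finset.sum_sigma]
        dsimp only
        apply Finset.sum_congr rfl
        intro y hy
        have hyle : w y ≤ n + 1 := by
          have := Finset.mem_of_mem_erase hy
          simpa only [Set.Finite.mem_toFinset, Set.mem_setOf_eq] using this
        exact Vfun_inner hw hw' hfin' n hyle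
      by_cases hx : w x ≤ n + 1
      · have hxmem : x ∈ (hfin (n+1)).toFinset := by
          simp only [Set.Finite.mem_toFinset, Set.mem_setOf_eq]; exact hx
        rw [← Finset.sum_erase_add _ _ hxmem, if_pos hx, hmain]
      · have hempty : (hfin (n+1)).toFinset.erase x = (hfin (n+1)).toFinset := by
          rw [Finset.erase_eq_self]
          simp only [Set.Finite.mem_toFinset, Set.mem_setOf_eq]
          omega
        rw [if_neg hx, add_zero, ← hmain, hempty]

end WnumElim

end WittAux

namespace WittAux

open FormalComm

lemma M_eq_W_base {A : Type} (w : A → ℕ) (r : FormalComm A → FormalComm A → Prop)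
    (hw : ∀ a, 1 ≤ w a) (hfin : ∀ n, {a : A | w a ≤ n}.Finite) (N : ℕ)
    (hempty : ∀ a : A, ¬ (w a ≤ N)) :
    ∀ k ≤ N, (Mset w r k).ncard = Wnum w hw hfin k := by
  intro k hk
  match k with
  | 0 =>
    rw [Mset_zero hw, Wnum_zero]
    exact Set.ncard_singleton 0
  | (k+1) =>
    rw [Wnum_succ]
    have h1 : (hfin (k+1)).toFinset = ∅ := by
      ext a
      simp only [Set.Finite.mem_toFinset, Set.mem_setOf_eq, Finset.notMem_empty, iff_false]
      intro h
      exact hempty a (by omega)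
    rw [h1, Finset.sum_empty]
    have h2 : Mset w r (k+1) = ∅ := by
      ext M
      simp only [Set.mem_empty_iff_false, iff_false]
      rintro ⟨hbas, hsum⟩
      rcases Multiset.empty_or_exists_mem M with rfl | ⟨c, hc⟩
      · simp at hsum
      · obtain ⟨a, ha⟩ := wt_letter w c
        have h3 : wt w c ≤ (M.map (wt w)).sum :=
          Multiset.le_sum_of_mem (Multiset.mem_map_of_mem _ hc)
        exact hempty a (by omega)
    rw [h2]
    simp

lemma M_eq_W (N : ℕ) : ∀ t s : ℕ, ∀ (A : Type) (w : A → ℕ)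
    (r : FormalComm A → FormalComm A → Prop)
    (hw : ∀ a, 1 ≤ w a) (hfin : ∀ n, {a : A | w a ≤ n}.Finite)
    (hr : IsStrictTotalOrder (FormalComm A) r)
    (hwt : ∀ a b : FormalComm A, wt w a < wt w b → r a b),
    (∀ a, w a ≤ N → N + 1 - t ≤ w a) →
    ({a : A | w a = N + 1 - t ∧ w a ≤ N}).ncard ≤ s →
    ∀ k ≤ N, (Mset w r k).ncard = Wnum w hw hfin k := by
  intro t
  induction t with
  | zero =>
    intro s A w r hw hfin hr hwt h1 _
    apply M_eq_W_base
    intro a ha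
    have := h1 a ha
    omega
  | succ t iht =>
    intro s
    induction s with
    | zero =>
      intro A w r hw hfin hr hwt h1 h2
      have hDfin : ({a : A | w a = N + 1 - (t+1) ∧ w a ≤ N}).Finite :=
        Set.Finite.subset (hfin N) (fun a ha => ha.2)
      have hE : {a : A | w a = N + 1 - (t+1) ∧ w a ≤ N} = ∅ :=
        (Set.ncard_eq_zero hDfin).mp (Nat.le_zero.mp h2)
      apply iht (({a : A | w a = N + 1 - t ∧ w a ≤ N}).ncard) A w r hw hfin hr hwt _ le_rfl
      intro a ha
      have h3 := h1 a ha
      have h4 : a ∉ ({a : A | w a = N + 1 - (t+1) ∧ w a ≤ N}) := by rw [hE]; exact Set.notMem_empty a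
      simp only [Set.mem_setOf_eq, not_and] at h4
      by_cases h5 : w a = N + 1 - (t + 1)
      · exact absurd ha (h4 h5)
      · omega
    | succ s ihs =>
      intro A w r hw hfin hr hwt h1 h2
      by_cases hE : {a : A | w a = N + 1 - (t+1) ∧ w a ≤ N} = ∅
      · apply iht (({a : A | w a = N + 1 - t ∧ w a ≤ N}).ncard) A w r hw hfin hr hwt _ le_rfl
        intro a ha
        have h3 := h1 a ha
        have h4 : a ∉ ({a : A | w a = N + 1 - (t+1) ∧ w a ≤ N}) := by
          rw [hE]; exact Set.notMem_empty a
        simp only [Set.mem_setOf_eq, not_and] at h4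
        by_cases h5 : w a = N + 1 - (t + 1)
        · exact absurd ha (h4 h5)
        · omega
      · -- the elimination step
        classical
        set w0 := N + 1 - (t + 1) with hw0def
        set D := {a : A | w a = w0 ∧ w a ≤ N} with hDdef
        have hDfin : D.Finite := Set.Finite.subset (hfin N) (fun a ha => ha.2)
        have hDne : hDfin.toFinset.Nonempty := by
          rw [Set.Finite.toFinset_nonempty]
          exact Set.nonempty_iff_ne_empty.mpr hE
        have hra : IsStrictTotalOrder A (fun a b => r (.of a) (.of b)) :=
          { trichotomous := fun a b h1 h2 => by
              have h := hr.trichotomous (FormalComm.of a) (FormalComm.of b) h1 h2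
              injection h
            irrefl := fun a => hr.irrefl (FormalComm.of a)
            trans := fun a b c hab hbc => hr.trans _ _ _ hab hbc }
        obtain ⟨x, hxD, hxmin⟩ := exists_rmin _ hra hDfin.toFinset hDne
        have hxD' : w x = w0 ∧ w x ≤ N := by
          have h := hDfin.mem_toFinset.mp hxD; exact h
        have hw0pos : 1 ≤ w0 := hxD'.1 ▸ hw x
        have hw0N : w0 ≤ N := hxD'.1 ▸ hxD'.2
        -- no tree has weight < w0
        have hno : ∀ c : FormalComm A, ¬ (wt w c < w0) := by
          intro c hlt
          obtain ⟨a, ha⟩ := wt_letter w c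
          have h3 := h1 a (by omega)
          omega
        -- x is the r-minimum of all trees
        have hmin : ∀ c : FormalComm A, c ≠ .of x → r (.of x) c := by
          intro c hc
          rcases (haveI := hr; trichotomous_of r (FormalComm.of x) c) with h | h | h
          · exact h
          · exact absurd h.symm hc
          · exfalso
            have hwtc : wt w c ≤ w0 := by
              by_contra hgt
              have : wt w (FormalComm.of x) < wt w c := by
                show w x < wt w c
                omega
              exact r_asymm hr (hwt _ _ this) h
            have hwtc' : wt w c = w0 := by
              have := hno c; omega
            match c, hwtc' with
            | .of y, hy =>
              have hyD : y ∈ hDfin.toFinset := by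
                simp only [Set.Finite.mem_toFinset, hDdef, Set.mem_setOf_eq]
                have : wt w (FormalComm.of y) = w y := rfl
                constructor <;> omega
              have hyx : y ≠ x := fun hyx => hc (by rw [hyx])
              exact r_asymm hr (hxmin y hyD hyx) h
            | .comm b a, hy =>
              have hb := hno b
              have ha := hno a
              have : wt w (FormalComm.comm b a) = wt w b + wt w a := rfl
              omega
        -- the eliminated context
        have hw' := elimW_pos (x := x) hw
        have hfin' := elimW_fin (x := x) hw hfin
        have hr' := elimR_sto (x := x) hr
        have hwt' := elimR_wt (x := x) hwt
        have cond1' : ∀ p : ElimA x, elimW w x p ≤ N → N + 1 - (t+1) ≤ elimW w x p := by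
          rintro ⟨⟨y, hy⟩, k⟩ hp
          simp only [elimW] at hp ⊢
          have h3 := h1 y (by omega)
          omega
        have cond2' : ({p : ElimA x | elimW w x p = N + 1 - (t+1) ∧ elimW w x p ≤ N}).ncard ≤ s := by
          have hsub : (fun p : ElimA x => p.1.1) ''
              {p : ElimA x | elimW w x p = N + 1 - (t+1) ∧ elimW w x p ≤ N} ⊆ D \ {x} := by
            rintro a ⟨⟨⟨y, hy⟩, k⟩, ⟨hp1, hp2⟩, rfl⟩
            simp only [elimW] at hp1 hp2
            have hx0 : w x = w0 := hxD'.1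
            have hwy := hw y
            have hk0 : k = 0 := by
              rcases Nat.eq_zero_or_pos k with h | h
              · exact h
              · exfalso
                have h6 : w x ≤ k * w x := Nat.le_mul_of_pos_left _ h
                omega
            subst hk0
            refine ⟨⟨?_, ?_⟩, hy⟩
            · show w y = w0
              omega
            · show w y ≤ N
              omega
          have hinj : Set.InjOn (fun p : ElimA x => p.1.1)
              {p : ElimA x | elimW w x p = N + 1 - (t+1) ∧ elimW w x p ≤ N} := by
            rintro ⟨⟨y, hy⟩, k⟩ ⟨hp1, -⟩ ⟨⟨y', hy'⟩, k'⟩ ⟨hq1, -⟩ heq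
            simp only at heq
            subst heq
            simp only [elimW] at hp1 hq1
            have hx0 : w x = w0 := hxD'.1
            have hwy := hw y
            have hk0 : k = 0 := by
              rcases Nat.eq_zero_or_pos k with h | h
              · exact h
              · exfalso
                have h6 : w x ≤ k * w x := Nat.le_mul_of_pos_left _ h
                omega
            have hk0' : k' = 0 := by
              rcases Nat.eq_zero_or_pos k' with h | h
              · exact h
              · exfalso
                have h6 : w x ≤ k' * w x := Nat.le_mul_of_pos_left _ h
                omega
            subst hk0; subst hk0'
            rfl
          calc ({p : ElimA x | elimW w x p = N + 1 - (t+1) ∧ elimW w x p ≤ N}).ncard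
              = ((fun p : ElimA x => p.1.1) ''
                {p : ElimA x | elimW w x p = N + 1 - (t+1) ∧ elimW w x p ≤ N}).ncard :=
                (Set.ncard_image_of_injOn hinj).symm
            _ ≤ (D \ {x}).ncard := Set.ncard_le_ncard hsub
                (Set.Finite.subset hDfin (Set.diff_subset))
            _ = D.ncard - 1 := Set.ncard_diff_singleton_of_mem
                (by simpa only [Set.Finite.mem_toFinset] using hxD)
            _ ≤ s := by
                have : D.ncard ≤ s + 1 := h2
                omega
        have hMW' := ihs (ElimA x) (elimW w x) (elimR r x) hw' hfin' hr' hwt' cond1' cond2'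
        intro k hk
        rw [Mset_elim hw hfin hr hmin k, Wnum_elim hw hfin hw' hfin' k, Vfun]
        apply Finset.sum_congr rfl
        intro m hm
        exact hMW' _ (by omega)

end WittAux

namespace WittAux

open FormalComm

variable {A : Type}

section Marked

attribute [local instance] Classical.propDecidable

variable {w : A → ℕ} {r : FormalComm A → FormalComm A → Prop}

/-- Basic commutators of weight exactly `m`. -/
def Bset (w : A → ℕ) (r : FormalComm A → FormalComm A → Prop) (m : ℕ) :
    Set (FormalComm A) := {c | IsBasic r c ∧ wt w c = m}

lemma Bset_finite (hw : ∀ a, 1 ≤ w a) (hfin : ∀ n, {a : A | w a ≤ n}.Finite) (m : ℕ) :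
    (Bset w r m).Finite :=
  Set.Finite.subset (finite_wt_le hw hfin m) (fun c hc => le_of_eq hc.2)

lemma count_ge_ncard (hw : ∀ a, 1 ≤ w a) (hfin : ∀ n, {a : A | w a ≤ n}.Finite)
    {c : FormalComm A} (hc : IsBasic r c) (n j : ℕ) (hj : 1 ≤ j) :
    ({M | M ∈ Mset w r n ∧ j ≤ M.count c}).ncard
      = if j * wt w c ≤ n then (Mset w r (n - j * wt w c)).ncard else 0 := by
  by_cases hjn : j * wt w c ≤ n
  · rw [if_pos hjn]
    set f : Multiset (FormalComm A) → Multiset (FormalComm A) :=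
      fun M => M - Multiset.replicate j c with hfdef
    have main : ∀ M ∈ {M | M ∈ Mset w r n ∧ j ≤ M.count c},
        f M ∈ Mset w r (n - j * wt w c) ∧ f M + Multiset.replicate j c = M := by
      rintro M ⟨⟨hbas, hsum⟩, hcount⟩
      have hrep : Multiset.replicate j c ≤ M := Multiset.le_count_iff_replicate_le.mp hcount
      have hMN : f M + Multiset.replicate j c = M := tsub_add_cancel_of_le hrep
      refine ⟨⟨?_, ?_⟩, hMN⟩
      · intro e he
        exact hbas e (Multiset.mem_of_le tsub_le_self he)
      · have h1 : (((f M) + Multiset.replicate j c).map (wt w)).sum = n := by rw [hMN, hsum]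
        rw [Multiset.map_add, Multiset.sum_add, Multiset.map_replicate,
          Multiset.sum_replicate, smul_eq_mul] at h1
        omega
    have main' : ∀ M' ∈ Mset w r (n - j * wt w c),
        (M' + Multiset.replicate j c) ∈ {M | M ∈ Mset w r n ∧ j ≤ M.count c}
          ∧ f (M' + Multiset.replicate j c) = M' := by
      rintro M' ⟨hbas', hsum'⟩
      refine ⟨⟨⟨?_, ?_⟩, ?_⟩, ?_⟩
      · intro e he
        rcases Multiset.mem_add.mp he with he | he
        · exact hbas' e he
        · rw [Multiset.eq_of_mem_replicate he]; exact hc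
      · rw [Multiset.map_add, Multiset.sum_add, Multiset.map_replicate,
          Multiset.sum_replicate, smul_eq_mul, hsum']
        omega
      · rw [Multiset.count_add, Multiset.count_replicate_self]
        omega
      · rw [hfdef]
        exact add_tsub_cancel_right _ _
    have himg : f '' {M | M ∈ Mset w r n ∧ j ≤ M.count c} = Mset w r (n - j * wt w c) := by
      apply Set.eq_of_subset_of_subset
      · rintro _ ⟨M, hM, rfl⟩; exact (main M hM).1
      · intro M' hM'
        exact ⟨M' + Multiset.replicate j c, (main' M' hM').1, (main' M' hM').2⟩
    rw [← himg, Set.ncard_image_of_injOn]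
    intro M1 h1 M2 h2 heq
    rw [← (main M1 h1).2, ← (main M2 h2).2, heq]
  · rw [if_neg hjn]
    convert Set.ncard_empty (Multiset (FormalComm A))
    ext M
    simp only [Set.mem_setOf_eq, Set.mem_empty_iff_false, iff_false, not_and]
    rintro ⟨hbas, hsum⟩ hcount
    exact hjn (by rw [← hsum]; exact count_wt_le_sum M c j hcount)

lemma marked_identity (hw : ∀ a, 1 ≤ w a) (hfin : ∀ n, {a : A | w a ≤ n}.Finite) (n : ℕ) :
    n * (Mset w r n).ncard
      = ∑ m ∈ Finset.Icc 1 n, (Bset w r m).ncard *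
          (m * ∑ j ∈ (Finset.Icc 1 n).filter (fun j => j * m ≤ n),
            (Mset w r (n - j * m)).ncard) := by
  classical
  have hMfin := Mset_finite (r := r) hw hfin n
  have hBfin : ({c : FormalComm A | IsBasic r c ∧ wt w c ≤ n}).Finite :=
    Set.Finite.subset (finite_wt_le hw hfin n) (fun c hc => hc.2)
  set FnF := hMfin.toFinset with hFnF
  set BnF := hBfin.toFinset with hBnF
  have hmemF : ∀ M ∈ FnF, M ∈ Mset w r n := fun M hM => hMfin.mem_toFinset.mp hM
  -- step 1 : total weight summed over all multisets
  have step1 : n * (Mset w r n).ncard = ∑ M ∈ FnF, (M.map (wt w)).sum := by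
    rw [Finset.sum_congr rfl (fun M hM => (hmemF M hM).2), Finset.sum_const,
      smul_eq_mul, Set.ncard_eq_toFinset_card _ hMfin, mul_comm]
  -- step 2 : expand each total weight as a sum over basic commutators
  have step2 : ∀ M ∈ FnF, (M.map (wt w)).sum = ∑ c ∈ BnF, M.count c * wt w c := by
    intro M hM
    rw [Finset.sum_multiset_map_count]
    apply Finset.sum_subset
    · intro c hcM
      rw [Multiset.mem_toFinset] at hcM
      rw [hBnF, Set.Finite.mem_toFinset]
      refine ⟨(hmemF M hM).1 c hcM, ?_⟩
      have : wt w c ≤ (M.map (wt w)).sum :=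
        Multiset.le_sum_of_mem (Multiset.mem_map_of_mem _ hcM)
      rw [(hmemF M hM).2] at this
      exact this
    · intro c _ hcM
      rw [Multiset.mem_toFinset] at hcM
      rw [Multiset.count_eq_zero_of_notMem hcM]
      simp
  -- step 4 : for fixed c, sum the counts over all multisets
  have step4 : ∀ c ∈ BnF, ∑ M ∈ FnF, M.count c
      = ∑ j ∈ (Finset.Icc 1 n).filter (fun j => j * wt w c ≤ n),
          (Mset w r (n - j * wt w c)).ncard := by
    intro c hcB
    rw [hBnF, Set.Finite.mem_toFinset] at hcB
    have hwtc : 1 ≤ wt w c := wt_pos hw c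
    have hcnt : ∀ M ∈ FnF, M.count c = ((Finset.Icc 1 n).filter (fun j => j ≤ M.count c)).card := by
      intro M hM
      have hcn : M.count c ≤ n := by
        have h1 : M.count c * wt w c ≤ (M.map (wt w)).sum := count_wt_le_sum M c _ le_rfl
        have h2 : M.count c ≤ M.count c * wt w c := Nat.le_mul_of_pos_right _ hwtc
        rw [(hmemF M hM).2] at h1
        omega
      rw [show (Finset.Icc 1 n).filter (fun j => j ≤ M.count c) = Finset.Icc 1 (M.count c) by
        ext j
        simp only [Finset.mem_filter, Finset.mem_Icc]
        omega]
      rw [Nat.card_Icc]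
      omega
    rw [Finset.sum_congr rfl hcnt]
    simp_rw [Finset.card_filter]
    rw [Finset.sum_comm]
    have inner : ∀ j ∈ Finset.Icc 1 n, (∑ M ∈ FnF, if j ≤ M.count c then 1 else 0)
        = if j * wt w c ≤ n then (Mset w r (n - j * wt w c)).ncard else 0 := by
      intro j hj
      rw [Finset.mem_Icc] at hj
      rw [← Finset.card_filter]
      rw [← count_ge_ncard hw hfin hcB.1 n j hj.1]
      have hset : {M | M ∈ Mset w r n ∧ j ≤ M.count c}
          = ((FnF.filter (fun M => j ≤ M.count c)) : Finset (Multiset (FormalComm A))) := by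
        ext M
        simp only [Set.mem_setOf_eq, Finset.coe_filter, hFnF, Set.Finite.mem_toFinset]
      rw [hset, Set.ncard_coe_finset]
    rw [Finset.sum_congr rfl inner, Finset.sum_ite, Finset.sum_const_zero, add_zero]
  -- assemble
  rw [step1, Finset.sum_congr rfl step2, Finset.sum_comm]
  have step3 : ∀ c ∈ BnF, ∑ M ∈ FnF, M.count c * wt w c
      = wt w c * ∑ j ∈ (Finset.Icc 1 n).filter (fun j => j * wt w c ≤ n),
          (Mset w r (n - j * wt w c)).ncard := by
    intro c hcB
    rw [← step4 c hcB, Finset.mul_sum]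
    apply Finset.sum_congr rfl
    intro M _
    ring
  rw [Finset.sum_congr rfl step3]
  -- step 5 : group by weight
  have hmaps : ∀ c ∈ BnF, wt w c ∈ Finset.Icc 1 n := by
    intro c hcB
    rw [hBnF, Set.Finite.mem_toFinset] at hcB
    rw [Finset.mem_Icc]
    exact ⟨wt_pos hw c, hcB.2⟩
  rw [← Finset.sum_fiberwise_of_maps_to' hmaps
    (fun m => m * ∑ j ∈ (Finset.Icc 1 n).filter (fun j => j * m ≤ n),
      (Mset w r (n - j * m)).ncard)]
  apply Finset.sum_congr rfl
  intro m hm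
  rw [Finset.mem_Icc] at hm
  rw [Finset.sum_const, smul_eq_mul]
  congr 1
  rw [show (Bset w r m) = ((BnF.filter (fun c => wt w c = m)) : Finset (FormalComm A)) by
    ext c
    simp only [Bset, Set.mem_setOf_eq, Finset.coe_filter, hBnF, Set.Finite.mem_toFinset]
    constructor
    · rintro ⟨h1, h2⟩
      exact ⟨⟨h1, by omega⟩, h2⟩
    · rintro ⟨⟨h1, -⟩, h2⟩
      exact ⟨h1, h2⟩]
  rw [Set.ncard_coe_finset]

end Marked

end WittAux

namespace WittAux

open FormalComm

section Final

variable {d : ℕ}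

lemma weight_eq : ∀ c : FormalComm (Fin d), c.weight = wt (fun _ => 1) c
  | .of _ => rfl
  | .comm b a => by
    show b.weight + a.weight = wt (fun _ => 1) b + wt (fun _ => 1) a
    rw [weight_eq b, weight_eq a]

lemma hfin1 : ∀ n, {a : Fin d | (fun _ => (1:ℕ)) a ≤ n}.Finite := fun _ => Set.toFinite _

lemma Wnum_pow : ∀ n, Wnum (fun _ : Fin d => 1) (fun _ => le_rfl) hfin1 n = d ^ n
  | 0 => by rw [Wnum_zero]; simp
  | (n+1) => by
    rw [Wnum_succ]
    have h1 : (hfin1 (n+1)).toFinset = (Finset.univ : Finset (Fin d)) := by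
      ext a; simp
    rw [h1]
    rw [Finset.sum_congr rfl (fun a (_ : a ∈ Finset.univ) => by
      show Wnum (fun _ : Fin d => 1) (fun _ => le_rfl) hfin1 (n + 1 - 1) = d ^ n
      rw [show n + 1 - 1 = n by omega, Wnum_pow n])]
    rw [Finset.sum_const, smul_eq_mul, Finset.card_univ, Fintype.card_fin, pow_succ, mul_comm]

lemma Mpow (r : FormalComm (Fin d) → FormalComm (Fin d) → Prop)
    (hr : IsStrictTotalOrder (FormalComm (Fin d)) r)
    (hwt : ∀ a b : FormalComm (Fin d), wt (fun _ => 1) a < wt (fun _ => 1) b → r a b) :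
    ∀ n, (Mset (fun _ => 1) r n).ncard = d ^ n := by
  intro n
  rw [← Wnum_pow n]
  apply M_eq_W n n d (Fin d) (fun _ => 1) r (fun _ => le_rfl) hfin1 hr hwt _ _ n le_rfl
  · intro a _
    show n + 1 - n ≤ 1
    omega
  · calc ({a : Fin d | (fun _ => (1:ℕ)) a = n + 1 - n ∧ (fun _ => (1:ℕ)) a ≤ n}).ncard
        ≤ (Set.univ : Set (Fin d)).ncard :=
          Set.ncard_le_ncard (Set.subset_univ _) Set.finite_univ
    _ = d := by rw [Set.ncard_univ, Nat.card_eq_fintype_card, Fintype.card_fin]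

lemma reindex (χ : ℕ → ℕ) (d n : ℕ) :
    ∑ m ∈ Finset.Icc 1 n,
        χ m * (m * ∑ j ∈ (Finset.Icc 1 n).filter (fun j => j * m ≤ n), d ^ (n - j * m))
      = ∑ k ∈ Finset.Icc 1 n, (∑ p ∈ k.divisorsAntidiagonal, p.1 * χ p.1) * d ^ (n - k) := by
  have lhs1 : ∀ m ∈ Finset.Icc 1 n,
      χ m * (m * ∑ j ∈ (Finset.Icc 1 n).filter (fun j => j * m ≤ n), d ^ (n - j * m))
        = ∑ j ∈ (Finset.Icc 1 n).filter (fun j => j * m ≤ n), m * χ m * d ^ (n - j * m) := by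
    intro m _
    rw [Finset.mul_sum, Finset.mul_sum]
    apply Finset.sum_congr rfl
    intro j _
    ring
  have rhs1 : ∀ k ∈ Finset.Icc 1 n,
      (∑ p ∈ k.divisorsAntidiagonal, p.1 * χ p.1) * d ^ (n - k)
        = ∑ p ∈ k.divisorsAntidiagonal, p.1 * χ p.1 * d ^ (n - k) :=
    fun k _ => Finset.sum_mul _ _ _
  rw [Finset.sum_congr rfl lhs1, Finset.sum_congr rfl rhs1, Finset.sum_sigma', Finset.sum_sigma']
  refine Finset.sum_bij' (fun q _ => (⟨q.2 * q.1, (q.1, q.2)⟩ : Σ _ : ℕ, ℕ × ℕ))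
    (fun q _ => (⟨q.2.1, q.2.2⟩ : Σ _ : ℕ, ℕ)) ?_ ?_ ?_ ?_ ?_
  · rintro ⟨m, j⟩ hq
    simp only [Finset.mem_sigma, Finset.mem_Icc, Finset.mem_filter] at hq
    obtain ⟨⟨hm1, hmn⟩, ⟨hj1, hjn⟩, hjm⟩ := hq
    simp only [Finset.mem_sigma, Finset.mem_Icc, Nat.mem_divisorsAntidiagonal]
    refine ⟨⟨?_, hjm⟩, by ring, ?_⟩
    · exact Nat.one_le_iff_ne_zero.mpr (Nat.mul_ne_zero (by omega) (by omega))
    · exact Nat.mul_ne_zero (by omega) (by omega)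
  · rintro ⟨k, a, b⟩ hq
    simp only [Finset.mem_sigma, Finset.mem_Icc, Nat.mem_divisorsAntidiagonal] at hq
    obtain ⟨⟨hk1, hkn⟩, hab, hk0⟩ := hq
    have ha0 : a ≠ 0 := by rintro rfl; simp at hab; omega
    have hb0 : b ≠ 0 := by rintro rfl; simp at hab; omega
    have hak : a ≤ k := by
      rw [← hab]; exact Nat.le_mul_of_pos_right _ (by omega)
    have hbk : b ≤ k := by
      rw [← hab]; exact Nat.le_mul_of_pos_left _ (by omega)
    simp only [Finset.mem_sigma, Finset.mem_Icc, Finset.mem_filter]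
    refine ⟨⟨by omega, by omega⟩, ⟨by omega, by omega⟩, by rw [mul_comm, hab]; omega⟩
  · rintro ⟨m, j⟩ _
    rfl
  · rintro ⟨k, a, b⟩ hq
    simp only [Finset.mem_sigma, Finset.mem_Icc, Nat.mem_divisorsAntidiagonal] at hq
    obtain ⟨-, hab, -⟩ := hq
    show (⟨b * a, (a, b)⟩ : Σ _ : ℕ, ℕ × ℕ) = ⟨k, (a, b)⟩
    have : b * a = k := by rw [mul_comm, hab]
    rw [this]
  · rintro ⟨m, j⟩ _
    rfl

lemma cf_eq_pow (d : ℕ) (cf : ℕ → ℕ)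
    (hI : ∀ n, 1 ≤ n → n * d ^ n = ∑ k ∈ Finset.Icc 1 n, cf k * d ^ (n - k)) :
    ∀ n, 1 ≤ n → cf n = d ^ n := by
  intro n
  induction n using Nat.strong_induction_on with
  | _ n ih =>
    intro hn
    have hI' := hI n hn
    have hterm : ∀ k ∈ Finset.Icc 1 (n-1), cf k * d ^ (n - k) = d ^ n := by
      intro k hk
      rw [Finset.mem_Icc] at hk
      rw [ih k (by omega) (by omega), ← pow_add]
      congr 1
      omega
    rw [show Finset.Icc 1 n = insert n (Finset.Icc 1 (n-1)) by
        ext k; simp only [Finset.mem_insert, Finset.mem_Icc]; omega,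
      Finset.sum_insert (by simp only [Finset.mem_Icc]; omega)] at hI'
    rw [Finset.sum_congr rfl hterm, Finset.sum_const, smul_eq_mul, Nat.card_Icc] at hI'
    rw [Nat.sub_self, pow_zero, mul_one] at hI'
    rw [show n - 1 + 1 - 1 = n - 1 by omega] at hI'
    have hmul : n * d ^ n = d ^ n + (n-1) * d ^ n := by
      nth_rewrite 1 [show n = 1 + (n-1) by omega]
      ring
    rw [hmul] at hI'
    exact (Nat.add_right_cancel hI').symm

end Final

end WittAux

open WittAux in
/-- The number of basic commutators of weight `n` on `d` generators is given by the
Witt formula `χ_n(d) = (1/n) ∑_{m ∣ n} μ(m) d^{n/m}`. -/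
theorem witt_formula_count_basic_commutators (n d : ℕ) (hn : 1 ≤ n)
    (r : FormalComm (Fin d) → FormalComm (Fin d) → Prop)
    (hr : IsStrictTotalOrder (FormalComm (Fin d)) r)
    (hwt : ∀ a b : FormalComm (Fin d), a.weight < b.weight → r a b) :
    (n : ℤ) * ({c : FormalComm (Fin d) | FormalComm.IsBasic r c ∧ c.weight = n}.ncard : ℤ)
      = ∑ m ∈ n.divisors, ArithmeticFunction.moebius m * (d : ℤ) ^ (n / m) := by
  classical
  have hwt' : ∀ a b : FormalComm (Fin d), wt (fun _ => 1) a < wt (fun _ => 1) b → r a b := by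
    intro a b h
    apply hwt
    rw [weight_eq a, weight_eq b]
    exact h
  have hMpow := Mpow r hr hwt'
  set χ : ℕ → ℕ := fun m => (Bset (fun _ => (1:ℕ)) r m).ncard with hχdef
  have hIn : ∀ N, 1 ≤ N → N * d ^ N
      = ∑ k ∈ Finset.Icc 1 N, (∑ m ∈ k.divisors, m * χ m) * d ^ (N - k) := by
    intro N hN
    have h1 := marked_identity (w := fun _ => (1:ℕ)) (r := r) (fun _ => le_rfl) hfin1 N
    rw [hMpow N] at h1
    have h2 : ∀ m ∈ Finset.Icc 1 N,
        (Bset (fun _ => (1:ℕ)) r m).ncard *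
          (m * ∑ j ∈ (Finset.Icc 1 N).filter (fun j => j * m ≤ N),
            (Mset (fun _ => (1:ℕ)) r (N - j * m)).ncard)
        = χ m * (m * ∑ j ∈ (Finset.Icc 1 N).filter (fun j => j * m ≤ N), d ^ (N - j * m)) := by
      intro m _
      congr 1
      congr 1
      apply Finset.sum_congr rfl
      intro j _
      rw [hMpow]
    rw [Finset.sum_congr rfl h2, reindex χ d N] at h1
    rw [h1]
    apply Finset.sum_congr rfl
    intro k _
    congr 1
    exact Nat.sum_divisorsAntidiagonal (fun i _ => i * χ i)
  have hc := cf_eq_pow d (fun k => ∑ m ∈ k.divisors, m * χ m) hIn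
  have hdiv : ∀ k : ℕ, k > 0 → ∑ m ∈ k.divisors, ((m : ℤ) * (χ m : ℤ)) = (d : ℤ) ^ k := by
    intro k hk
    have h3 := hc k hk
    have h4 : ((∑ m ∈ k.divisors, m * χ m : ℕ) : ℤ) = ((d ^ k : ℕ) : ℤ) := by
      exact_mod_cast congrArg (Nat.cast : ℕ → ℤ) h3
    push_cast at h4
    exact h4
  have hmob := (ArithmeticFunction.sum_eq_iff_sum_smul_moebius_eq
    (f := fun m => (m : ℤ) * (χ m : ℤ)) (g := fun k => (d : ℤ) ^ k)).mp hdiv n (by omega)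
  rw [Nat.sum_divisorsAntidiagonal
    (fun i j => (ArithmeticFunction.moebius i : ℤ) • (d : ℤ) ^ j)] at hmob
  have hsetχ : {c : FormalComm (Fin d) | FormalComm.IsBasic r c ∧ c.weight = n}
      = Bset (fun _ => (1:ℕ)) r n := by
    ext c
    simp only [Set.mem_setOf_eq, Bset, weight_eq c]
  rw [hsetχ, ← hmob]
  apply Finset.sum_congr rfl
  intro m _
  rw [zsmul_eq_mul, Int.cast_id]
end

section
/- Let c₁ ≥ c₂ ≥ 1 and n ≥ 1 with 2n − 2 < 2c₂ − c₁. If β and α are basic commutators on X with β > α, wt(β) ≥ c₁+n+1, wt(α) ≥ c₂+1, and wt(β)+wt(α) ≤ 2n+c₁+c₂+1, then [β,α] is a basic commutator on X. -/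
/-- Lemma 2.2(i): if `2n - 2 < 2c₂ - c₁` (stated as `2n + c₁ < 2c₂ + 2`), `c₁ ≥ c₂ ≥ 1`,
and `β > α` are basic commutators with `wt(β) ≥ c₁+n+1`, `wt(α) ≥ c₂+1`, and
`wt(β) + wt(α) ≤ 2n + c₁ + c₂ + 1`, then `[β,α]` is a basic commutator. -/
theorem comm_isBasic_of_weights_B {X : Type}
    (r : FormalComm X → FormalComm X → Prop)
    (hr : IsStrictTotalOrder (FormalComm X) r)
    (hwt : ∀ a b : FormalComm X, a.weight < b.weight → r a b)
    (c₁ c₂ n : ℕ) (hc : c₂ ≤ c₁) (hc₂ : 1 ≤ c₂) (hn : 1 ≤ n)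
    (hineq : 2 * n + c₁ < 2 * c₂ + 2)
    (β α : FormalComm X) (hβ : FormalComm.IsBasic r β) (hα : FormalComm.IsBasic r α)
    (hab : r α β)
    (hβlo : c₁ + n + 1 ≤ β.weight) (hαlo : c₂ + 1 ≤ α.weight)
    (hsum : β.weight + α.weight ≤ 2 * n + c₁ + c₂ + 1) :
    FormalComm.IsBasic r (.comm β α) := by
  haveI := hr
  refine FormalComm.IsBasic.comm _ _ hβ hα hab ?_
  rintro b₁ b₂ rfl hαb₂
  cases hβ with
  | comm _ _ hb₁ hb₂ h21 _ =>
    have hw : b₂.weight ≤ b₁.weight := by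
      by_contra h
      push_neg at h
      exact irrefl_of r b₂ (trans_of r h21 (hwt _ _ h))
    have hwc : (FormalComm.comm b₁ b₂).weight = b₁.weight + b₂.weight := rfl
    have hlt : b₂.weight < α.weight := by omega
    exact irrefl_of r α (trans_of r hαb₂ (hwt _ _ hlt))
end

section
/- Let F be a free group, c₁, c₂, n ≥ 1 with n−1 ≤ c₂ ≤ c₁. Then [γ_{c₁+1}(F), γ_{c₂+1}(F)] is generated, modulo H = [γ_{c₁+n+1}(F), γ_{c₂+1}(F)]·[γ_{c₂+n+1}(F), γ_{c₁+1}(F)], by the commutators [β,α] where β, α are basic commutators on the free generators with β > α, c₁+1 ≤ wt(β) ≤ c₁+n, c₂+1 ≤ wt(α) ≤ c₂+n. -/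
open scoped commutatorElement

namespace HallAux

open Subgroup

abbrev lowerCentralSeries (G : Type*) [Group G] (n : ℕ) : Subgroup G :=
  (⊤ : Subgroup G).lowerCentralSeries n

theorem lowerCentralSeries_antitone {G : Type*} [Group G] : Antitone (lowerCentralSeries G) :=
  Subgroup.lowerCentralSeries_antitone ⊤

theorem lowerCentralSeries_zero {G : Type*} [Group G] : lowerCentralSeries G 0 = ⊤ := rfl

theorem hallWitt {G : Type*} [Group G] (a b c : G) :
    (b⁻¹ * ⁅⁅b,a⁻¹⁆,c⁻¹⁆ * b) * (c⁻¹ * ⁅⁅c,b⁻¹⁆,a⁻¹⁆ * c) * (a⁻¹ * ⁅⁅a,c⁻¹⁆,b⁻¹⁆ * a) = 1 := by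
  group

theorem three_subgroups {G : Type*} [Group G] (A B C N : Subgroup G) [hN : N.Normal]
    (h1 : ⁅⁅B, C⁆, A⁆ ≤ N) (h2 : ⁅⁅C, A⁆, B⁆ ≤ N) : ⁅⁅A, B⁆, C⁆ ≤ N := by
  have key : ∀ x ∈ A, ∀ y ∈ B, ∀ z ∈ C, ⁅⁅x,y⁆,z⁆ ∈ N := by
    intro x hx y hy z hz
    have hw := hallWitt y⁻¹ x z⁻¹
    simp only [inv_inv] at hw
    have m2 : z * ⁅⁅z⁻¹,x⁻¹⁆,y⁆ * z⁻¹ ∈ N := by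
      have : ⁅⁅z⁻¹,x⁻¹⁆,y⁆ ∈ N :=
        h2 (commutator_mem_commutator (commutator_mem_commutator (inv_mem hz) (inv_mem hx)) hy)
      simpa [mul_assoc] using hN.conj_mem _ this z
    have m3 : y * ⁅⁅y⁻¹,z⁆,x⁻¹⁆ * y⁻¹ ∈ N := by
      have : ⁅⁅y⁻¹,z⁆,x⁻¹⁆ ∈ N :=
        h1 (commutator_mem_commutator (commutator_mem_commutator (inv_mem hy) hz) (inv_mem hx))
      simpa [mul_assoc] using hN.conj_mem _ this y
    have m1 : x⁻¹ * ⁅⁅x,y⁆,z⁆ * x ∈ N := by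
      have hh : x⁻¹ * ⁅⁅x,y⁆,z⁆ * x =
          ((z * ⁅⁅z⁻¹,x⁻¹⁆,y⁆ * z⁻¹) * (y * ⁅⁅y⁻¹,z⁆,x⁻¹⁆ * y⁻¹))⁻¹ := by
        rw [eq_inv_iff_mul_eq_one]
        calc x⁻¹ * ⁅⁅x,y⁆,z⁆ * x * ((z * ⁅⁅z⁻¹,x⁻¹⁆,y⁆ * z⁻¹) * (y * ⁅⁅y⁻¹,z⁆,x⁻¹⁆ * y⁻¹))
            = (x⁻¹ * ⁅⁅x,y⁆,z⁆ * x) * (z * ⁅⁅z⁻¹,x⁻¹⁆,y⁆ * z⁻¹) * (y * ⁅⁅y⁻¹,z⁆,x⁻¹⁆ * y⁻¹) := by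
              group
          _ = 1 := hw
      rw [hh]
      exact inv_mem (mul_mem m2 m3)
    have := hN.conj_mem _ m1 x
    simpa [mul_assoc] using this
  rw [commutator_le]
  intro g hg c hc
  rw [Subgroup.commutator_def] at hg
  induction hg using closure_induction with
  | mem u hu =>
    obtain ⟨a, ha, b, hb, rfl⟩ := hu
    exact key a ha b hb c hc
  | one => simpa using one_mem N
  | mul p q hp hq ihp ihq =>
    have : ⁅p*q, c⁆ = (p * ⁅q,c⁆ * p⁻¹) * ⁅p,c⁆ := by group
    rw [this]
    exact mul_mem (hN.conj_mem _ ihq p) ihp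
  | inv p hp ihp =>
    have : ⁅p⁻¹, c⁆ = p⁻¹ * ⁅p,c⁆⁻¹ * p := by group
    rw [this]
    simpa [mul_assoc] using hN.conj_mem _ (inv_mem ihp) p⁻¹

theorem lcs_comm_le {G : Type*} [Group G] :
    ∀ j i, ⁅lowerCentralSeries G i, lowerCentralSeries G j⁆ ≤ lowerCentralSeries G (i + j + 1) := by
  intro j
  induction j with
  | zero =>
    intro i
    rw [lowerCentralSeries_zero]
    exact le_of_eq (show ⁅lowerCentralSeries G i, ⊤⁆ = lowerCentralSeries G (i+0+1) from rfl)
  | succ j ih =>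
    intro i
    rw [Subgroup.commutator_comm,
      show lowerCentralSeries G (j+1) = ⁅lowerCentralSeries G j, ⊤⁆ from rfl]
    refine three_subgroups _ _ _ _ ?_ ?_
    · rw [Subgroup.commutator_comm (⊤ : Subgroup G) (lowerCentralSeries G i),
        show ⁅lowerCentralSeries G i, (⊤ : Subgroup G)⁆ = lowerCentralSeries G (i+1) from rfl]
      exact le_trans (ih (i+1)) (lowerCentralSeries_antitone (by omega))
    · calc ⁅⁅lowerCentralSeries G i, lowerCentralSeries G j⁆, (⊤ : Subgroup G)⁆
          ≤ ⁅lowerCentralSeries G (i+j+1), (⊤ : Subgroup G)⁆ :=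
            Subgroup.commutator_mono (ih i) le_rfl
        _ = lowerCentralSeries G (i+j+2) := rfl
        _ ≤ _ := lowerCentralSeries_antitone (by omega)

theorem comm_mul_left_central {Q : Type*} [Group Q] {a b c : Q}
    (h : ∀ q, Commute ⁅b,c⁆ q) : ⁅a*b,c⁆ = ⁅a,c⁆ * ⁅b,c⁆ := by
  have e : ⁅a*b,c⁆ = a * ⁅b,c⁆ * a⁻¹ * ⁅a,c⁆ := by group
  have e2 : a * ⁅b,c⁆ * a⁻¹ = ⁅b,c⁆ := by
    have := (h a).eq
    rw [← this]; group
  rw [e, e2, (h ⁅a,c⁆).eq]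

theorem comm_mul_right_central {Q : Type*} [Group Q] {a b c : Q}
    (h : ∀ q, Commute ⁅a,c⁆ q) : ⁅a,b*c⁆ = ⁅a,b⁆ * ⁅a,c⁆ := by
  have e : ⁅a,b*c⁆ = ⁅a,b⁆ * (b * ⁅a,c⁆ * b⁻¹) := by group
  have e2 : b * ⁅a,c⁆ * b⁻¹ = ⁅a,c⁆ := by
    have := (h b).eq
    rw [← this]; group
  rw [e, e2]

theorem comm_inv_left_central {Q : Type*} [Group Q] {a c : Q}
    (h : ∀ q, Commute ⁅a,c⁆ q) : ⁅a⁻¹,c⁆ = ⁅a,c⁆⁻¹ := by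
  have := comm_mul_left_central (a := a⁻¹) h
  rw [inv_mul_cancel] at this
  simp only [commutatorElement_one_left] at this
  rw [eq_inv_iff_mul_eq_one, ← this]

theorem comm_inv_right_central {Q : Type*} [Group Q] {a c : Q}
    (h : ∀ q, Commute ⁅a,c⁆ q) : ⁅a,c⁻¹⁆ = ⁅a,c⁆⁻¹ := by
  have := comm_mul_right_central (b := c⁻¹) h
  rw [inv_mul_cancel] at this
  simp only [commutatorElement_one_right] at this
  rw [eq_inv_iff_mul_eq_one, ← this]

variable {X : Type}

theorem weight_pos (t : FormalComm X) : 1 ≤ t.weight := by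
  induction t with
  | of x => simp [FormalComm.weight]
  | comm b a ihb iha => simp only [FormalComm.weight]; omega

theorem eval_mem_lcs (t : FormalComm X) :
    t.eval ∈ lowerCentralSeries (FreeGroup X) (t.weight - 1) := by
  induction t with
  | of x => simp [FormalComm.weight, FormalComm.eval]
  | comm b a ihb iha =>
    have h := Subgroup.commutator_mem_commutator ihb iha
    have h2 := lcs_comm_le (G := FreeGroup X) (a.weight - 1) (b.weight - 1) h
    have hb := weight_pos b
    have ha := weight_pos a
    have : b.weight - 1 + (a.weight - 1) + 1 = (FormalComm.comm b a).weight - 1 := by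
      simp only [FormalComm.weight]; omega
    rw [this] at h2
    exact h2

theorem eval_mem_lcs' (t : FormalComm X) {i : ℕ} (h : i + 1 ≤ t.weight) :
    t.eval ∈ lowerCentralSeries (FreeGroup X) i := by
  exact lowerCentralSeries_antitone (by have := weight_pos t; omega) (eval_mem_lcs t)

theorem finite_weight_le [Finite X] (w : ℕ) : {t : FormalComm X | t.weight ≤ w}.Finite := by
  induction w with
  | zero =>
    refine Set.Finite.subset (Set.finite_empty) ?_
    intro t ht
    have := weight_pos t
    simp only [Set.mem_setOf_eq] at ht
    omega
  | succ w ih =>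
    refine Set.Finite.subset ((Set.finite_range (FormalComm.of : X → FormalComm X)).union
      (Set.Finite.image2 FormalComm.comm ih ih)) ?_
    intro t ht
    cases t with
    | of x => exact Or.inl ⟨x, rfl⟩
    | comm b a =>
      refine Or.inr (Set.mem_image2_of_mem ?_ ?_)
      · have := weight_pos a
        simp only [FormalComm.weight, Set.mem_setOf_eq] at ht ⊢; omega
      · have := weight_pos b
        simp only [FormalComm.weight, Set.mem_setOf_eq] at ht ⊢; omega

variable {r : FormalComm X → FormalComm X → Prop}

theorem rasym (hr : IsStrictTotalOrder (FormalComm X) r) {a b : FormalComm X}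
    (h : r a b) : ¬ r b a := by
  letI := hr
  exact fun h' => absurd (trans_of r h h') (irrefl_of r a)

theorem wmono (hr : IsStrictTotalOrder (FormalComm X) r)
    (hwt : ∀ a b : FormalComm X, a.weight < b.weight → r a b) {a b : FormalComm X}
    (h : r a b) : a.weight ≤ b.weight := by
  by_contra hlt
  exact rasym hr h (hwt b a (by omega))

/-- The set of evaluations of basic commutators of weight `w`. -/
def basicSet (r : FormalComm X → FormalComm X → Prop) (w : ℕ) : Set (FreeGroup X) :=
  {g | ∃ t : FormalComm X, FormalComm.IsBasic r t ∧ t.weight = w ∧ t.eval = g}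

theorem closure_basicSet_le {w : ℕ} (h : 1 ≤ w) :
    Subgroup.closure (basicSet r w) ≤ lowerCentralSeries (FreeGroup X) (w - 1) := by
  rw [Subgroup.closure_le]
  rintro g ⟨t, _, hw, rfl⟩
  exact eval_mem_lcs' t (by omega)

theorem hallStep [Finite X] (hr : IsStrictTotalOrder (FormalComm X) r)
    (hwt : ∀ a b : FormalComm X, a.weight < b.weight → r a b) :
    ∀ k, lowerCentralSeries (FreeGroup X) k ≤
      Subgroup.closure (basicSet r (k+1)) ⊔ lowerCentralSeries (FreeGroup X) (k+1) := by
  intro k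
  induction k using Nat.strong_induction_on with
  | _ k IH =>
  cases k with
  | zero =>
    have h0 : (⊤ : Subgroup (FreeGroup X)) ≤ Subgroup.closure (basicSet r 1) := by
      rw [← FreeGroup.closure_range_of X]
      apply Subgroup.closure_mono
      rintro g ⟨x, rfl⟩
      exact ⟨.of x, FormalComm.IsBasic.of x, rfl, rfl⟩
    exact le_trans (le_trans le_top h0) le_sup_left
  | succ m =>
    set F := FreeGroup X
    set N := lowerCentralSeries F (m+2) with hN
    set mk : F →* F ⧸ N := QuotientGroup.mk' N with hmkdef
    set Clm : Subgroup (F ⧸ N) := Subgroup.map mk (Subgroup.closure (basicSet r (m+2))) with hClm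
    -- killing high terms
    have hk : ∀ u : F, u ∈ N → mk u = 1 := fun u hu => (QuotientGroup.eq_one_iff u).mpr hu
    -- centrality of weight m+2 image-elements
    have hc1 : ∀ u : F, u ∈ lowerCentralSeries F (m+1) → ∀ q, Commute (mk u) q := by
      intro u hu q
      obtain ⟨y, rfl⟩ := QuotientGroup.mk'_surjective N q
      apply commutatorElement_eq_one_iff_commute.mp
      rw [← map_commutatorElement]
      exact hk _ (lcs_comm_le 0 (m+1) (Subgroup.commutator_mem_commutator hu (Subgroup.mem_top y)))
    have hconj : ∀ u ∈ lowerCentralSeries F (m+1), ∀ q : F ⧸ N, q * mk u * q⁻¹ = mk u := by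
      intro u hu q
      have h := (hc1 u hu q).eq
      rw [← h]; group
    have hconj' : ∀ u ∈ lowerCentralSeries F (m+1), ∀ q : F ⧸ N, q⁻¹ * mk u * q = mk u := by
      intro u hu q
      have h := hconj u hu q⁻¹
      rwa [inv_inv] at h
    -- congruence of commutators modulo one level deeper
    have hcomm_eq : ∀ i j : ℕ, i + j = m → ∀ u u' v : F, u ∈ lowerCentralSeries F i →
        u' ∈ lowerCentralSeries F i → v ∈ lowerCentralSeries F j →
        u⁻¹ * u' ∈ lowerCentralSeries F (i+1) → mk ⁅u',v⁆ = mk ⁅u,v⁆ := by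
      intro i j hij u u' v hu hu' hv hd
      have h1 : mk ⁅u⁻¹*u', v⁆ = 1 := by
        apply hk
        have := lcs_comm_le j (i+1) (Subgroup.commutator_mem_commutator hd hv)
        exact lowerCentralSeries_antitone (by omega) this
      have e : u' = u * (u⁻¹ * u') := (mul_inv_cancel_left u u').symm
      calc mk ⁅u',v⁆ = ⁅mk u * mk (u⁻¹*u'), mk v⁆ := by
            rw [← map_mul, ← e, map_commutatorElement]
        _ = ⁅mk u, mk v⁆ * ⁅mk (u⁻¹*u'), mk v⁆ := by
            apply comm_mul_left_central
            rw [← map_commutatorElement, h1]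
            exact fun q => Commute.one_left q
        _ = mk ⁅u,v⁆ := by
            rw [← map_commutatorElement, ← map_commutatorElement, h1, mul_one]
    -- bilinearity
    have hbil : ∀ i j : ℕ, i + j = m → ∀ u u' v : F, u ∈ lowerCentralSeries F i →
        u' ∈ lowerCentralSeries F i → v ∈ lowerCentralSeries F j →
        mk ⁅u*u',v⁆ = mk ⁅u,v⁆ * mk ⁅u',v⁆ := by
      intro i j hij u u' v hu hu' hv
      rw [map_commutatorElement, map_commutatorElement, map_commutatorElement, map_mul]
      apply comm_mul_left_central
      rw [← map_commutatorElement]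
      apply hc1
      have := lcs_comm_le j i (Subgroup.commutator_mem_commutator hu' hv)
      exact lowerCentralSeries_antitone (by omega) this
    have hbilr : ∀ i j : ℕ, i + j = m → ∀ u v v' : F, u ∈ lowerCentralSeries F i →
        v' ∈ lowerCentralSeries F j →
        mk ⁅u,v*v'⁆ = mk ⁅u,v⁆ * mk ⁅u,v'⁆ := by
      intro i j hij u v v' hu hv'
      rw [map_commutatorElement, map_commutatorElement, map_commutatorElement, map_mul]
      apply comm_mul_right_central
      rw [← map_commutatorElement]
      apply hc1
      have := lcs_comm_le j i (Subgroup.commutator_mem_commutator hu hv')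
      exact lowerCentralSeries_antitone (by omega) this
    have hinvl : ∀ i j : ℕ, i + j = m → ∀ u v : F, u ∈ lowerCentralSeries F i →
        v ∈ lowerCentralSeries F j → mk ⁅u⁻¹,v⁆ = (mk ⁅u,v⁆)⁻¹ := by
      intro i j hij u v hu hv
      rw [map_commutatorElement, map_commutatorElement, map_inv]
      apply comm_inv_left_central
      rw [← map_commutatorElement]
      apply hc1
      have := lcs_comm_le j i (Subgroup.commutator_mem_commutator hu hv)
      exact lowerCentralSeries_antitone (by omega) this
    have hinvr : ∀ i j : ℕ, i + j = m → ∀ u v : F, u ∈ lowerCentralSeries F i →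
        v ∈ lowerCentralSeries F j → mk ⁅u,v⁻¹⁆ = (mk ⁅u,v⁆)⁻¹ := by
      intro i j hij u v hu hv
      rw [map_commutatorElement, map_commutatorElement, map_inv]
      apply comm_inv_right_central
      rw [← map_commutatorElement]
      apply hc1
      have := lcs_comm_le j i (Subgroup.commutator_mem_commutator hu hv)
      exact lowerCentralSeries_antitone (by omega) this
    -- membership of basic commutators of weight m+2
    have hBmem : ∀ t : FormalComm X, FormalComm.IsBasic r t → t.weight = m+2 →
        mk t.eval ∈ Clm := fun t h1 h2 =>
      Subgroup.mem_map_of_mem mk (Subgroup.subset_closure ⟨t, h1, h2, rfl⟩)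
    -- the Hall–Witt combination step
    have hcomb : ∀ p q t : ℕ, p + q + t + 1 = m → ∀ u v s : F,
        u ∈ lowerCentralSeries F p → v ∈ lowerCentralSeries F q →
        s ∈ lowerCentralSeries F t →
        mk ⁅⁅s,u⁆,v⁆ ∈ Clm → mk ⁅⁅s,v⁆,u⁆ ∈ Clm → mk ⁅⁅u,v⁆,s⁆ ∈ Clm := by
      intro p q t hpqt u v s hu hv hs K2 K3
      have hw := hallWitt (mk v)⁻¹ (mk u) (mk s)⁻¹
      rw [inv_inv, inv_inv] at hw
      -- identify the three factors as images
      have e1 : ⁅⁅mk u, mk v⁆, mk s⁆ = mk ⁅⁅u,v⁆,s⁆ := by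
        rw [map_commutatorElement, map_commutatorElement]
      have e2 : ⁅⁅(mk s)⁻¹, (mk u)⁻¹⁆, mk v⁆ = mk ⁅⁅s⁻¹,u⁻¹⁆,v⁆ := by
        rw [map_commutatorElement, map_commutatorElement, map_inv, map_inv]
      have e3 : ⁅⁅(mk v)⁻¹, mk s⁆, (mk u)⁻¹⁆ = mk ⁅⁅v⁻¹,s⁆,u⁻¹⁆ := by
        rw [map_commutatorElement, map_commutatorElement, map_inv, map_inv]
      have mem1 : ⁅⁅u,v⁆,s⁆ ∈ lowerCentralSeries F (m+1) := by
        have h1 := lcs_comm_le q p (Subgroup.commutator_mem_commutator hu hv)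
        have h2 := lcs_comm_le t (p+q+1) (Subgroup.commutator_mem_commutator h1 hs)
        exact lowerCentralSeries_antitone (by omega) h2
      have mem2 : ⁅⁅s⁻¹,u⁻¹⁆,v⁆ ∈ lowerCentralSeries F (m+1) := by
        have h1 := lcs_comm_le p t
          (Subgroup.commutator_mem_commutator (inv_mem hs) (inv_mem hu))
        have h2 := lcs_comm_le q (t+p+1) (Subgroup.commutator_mem_commutator h1 hv)
        exact lowerCentralSeries_antitone (by omega) h2
      have mem3 : ⁅⁅v⁻¹,s⁆,u⁻¹⁆ ∈ lowerCentralSeries F (m+1) := by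
        have h1 := lcs_comm_le t q
          (Subgroup.commutator_mem_commutator (inv_mem hv) hs)
        have h2 := lcs_comm_le p (q+t+1) (Subgroup.commutator_mem_commutator h1 (inv_mem hu))
        exact lowerCentralSeries_antitone (by omega) h2
      rw [e1, e2, e3, hconj' _ mem1 (mk u), hconj _ mem2 (mk s), hconj _ mem3 (mk v)] at hw
      -- reduce the second factor
      have r2 : mk ⁅⁅s⁻¹,u⁻¹⁆,v⁆ = mk ⁅⁅s,u⁆,v⁆ := by
        apply hcomm_eq (t+p+1) q (by omega)
        · exact lcs_comm_le p t (Subgroup.commutator_mem_commutator hs hu)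
        · exact lcs_comm_le p t
            (Subgroup.commutator_mem_commutator (inv_mem hs) (inv_mem hu))
        · exact hv
        · have hid : ⁅s,u⁆⁻¹ * ⁅s⁻¹,u⁻¹⁆ = ⁅⁅s,u⁆⁻¹, (u*s)⁻¹⁆ := by
            have key : ∀ {G : Type} [Group G] (s u : G),
                ⁅s,u⁆⁻¹ * ⁅s⁻¹,u⁻¹⁆ = ⁅⁅s,u⁆⁻¹, (u*s)⁻¹⁆ := by intros; group
            exact key s u
          rw [hid]
          have h1 : ⁅s,u⁆⁻¹ ∈ lowerCentralSeries F (t+p+1) :=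
            inv_mem (lcs_comm_le p t (Subgroup.commutator_mem_commutator hs hu))
          have := lcs_comm_le 0 (t+p+1)
            (Subgroup.commutator_mem_commutator h1 (Subgroup.mem_top (u*s)⁻¹))
          exact lowerCentralSeries_antitone (by omega) this
      -- reduce the third factor
      have r3 : mk ⁅⁅v⁻¹,s⁆,u⁻¹⁆ = (mk ⁅⁅s,v⁆,u⁆)⁻¹ := by
        have step1 : mk ⁅⁅v⁻¹,s⁆,u⁻¹⁆ = mk ⁅⁅s,v⁆,u⁻¹⁆ := by
          apply hcomm_eq (t+q+1) p (by omega)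
          · exact lcs_comm_le q t (Subgroup.commutator_mem_commutator hs hv)
          · have h1 := lcs_comm_le t q
              (Subgroup.commutator_mem_commutator (inv_mem hv) hs)
            exact lowerCentralSeries_antitone (by omega) h1
          · exact inv_mem hu
          · have hid : ⁅s,v⁆⁻¹ * ⁅v⁻¹,s⁆ = ⁅⁅s,v⁆⁻¹, v⁻¹⁆ := by
              have key : ∀ {G : Type} [Group G] (s v : G),
                  ⁅s,v⁆⁻¹ * ⁅v⁻¹,s⁆ = ⁅⁅s,v⁆⁻¹, v⁻¹⁆ := by intros; group
              exact key s v
            rw [hid]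
            have h1 : ⁅s,v⁆⁻¹ ∈ lowerCentralSeries F (t+q+1) :=
              inv_mem (lcs_comm_le q t (Subgroup.commutator_mem_commutator hs hv))
            have := lcs_comm_le 0 (t+q+1)
              (Subgroup.commutator_mem_commutator h1 (Subgroup.mem_top v⁻¹))
            exact lowerCentralSeries_antitone (by omega) this
        rw [step1]
        apply hinvr (t+q+1) p (by omega)
        · exact lcs_comm_le q t (Subgroup.commutator_mem_commutator hs hv)
        · exact hu
      rw [r2, r3] at hw
      have : mk ⁅⁅u,v⁆,s⁆ = ((mk ⁅⁅s,u⁆,v⁆) * (mk ⁅⁅s,v⁆,u⁆)⁻¹)⁻¹ := by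
        rw [eq_inv_iff_mul_eq_one, ← mul_assoc]
        exact hw
      rw [this]
      exact inv_mem (mul_mem K2 (inv_mem K3))
    -- finiteness-based measure
    have hMfin : ∀ b : FormalComm X, {c : FormalComm X | c.weight = b.weight ∧ r b c}.Finite :=
      fun b => (finite_weight_le b.weight).subset (fun c hc => le_of_eq hc.1)
    set M : FormalComm X → ℕ :=
      fun b => Set.ncard {c : FormalComm X | c.weight = b.weight ∧ r b c} with hM
    have hMlt : ∀ b t : FormalComm X, r b t → t.weight = b.weight → M t < M b := by
      intro b t hbt hwq
      apply Set.ncard_lt_ncard ?_ (hMfin b)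
      constructor
      · rintro c ⟨h1, h2⟩
        letI := hr
        exact ⟨by rw [h1, hwq], trans_of r hbt h2⟩
      · intro hsub
        have ht' := hsub ⟨hwq, hbt⟩
        letI := hr
        exact (irrefl_of r t) ht'.2
    -- the collection claim
    have coll : ∀ μ₁ μ₂ : ℕ, ∀ a b : FormalComm X, FormalComm.IsBasic r a →
        FormalComm.IsBasic r b → r b a → a.weight + b.weight = m + 2 →
        m + 2 - b.weight ≤ μ₁ → M b ≤ μ₂ → mk ⁅a.eval, b.eval⁆ ∈ Clm := by
      intro μ₁
      induction μ₁ using Nat.strong_induction_on with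
      | _ μ₁ IH1 =>
      intro μ₂
      induction μ₂ using Nat.strong_induction_on with
      | _ μ₂ IH2 =>
      intro a b ha hb hba hsum hμ₁ hμ₂
      have hwb1 := weight_pos b
      have hwmono := wmono hr hwt hba
      cases a with
      | of x =>
        have hbas : FormalComm.IsBasic r (FormalComm.comm (.of x) b) :=
          FormalComm.IsBasic.comm _ _ ha hb hba (fun b₁ b₂ h => by cases h)
        have hwc : (FormalComm.comm (.of x) b).weight = m + 2 := by
          simpa [FormalComm.weight] using hsum
        have := hBmem _ hbas hwc
        simpa [FormalComm.eval] using this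
      | comm a₁ a₂ =>
        have hwa1 := weight_pos a₁
        have hwa2 := weight_pos a₂
        rcases ha with _ | ⟨_, _, ha₁, ha₂, h21, hcond⟩
        by_cases hcase : r b a₂
        case neg =>
          have hbas : FormalComm.IsBasic r (FormalComm.comm (.comm a₁ a₂) b) := by
            refine FormalComm.IsBasic.comm _ _ ?_ hb hba ?_
            · exact FormalComm.IsBasic.comm _ _ ha₁ ha₂ h21 hcond
            · intro b₁ b₂ heq
              injection heq with e1 e2
              subst e2
              exact hcase
          have hwc : (FormalComm.comm (.comm a₁ a₂) b).weight = m + 2 := by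
            simpa [FormalComm.weight] using hsum
          have := hBmem _ hbas hwc
          simpa [FormalComm.eval] using this
        case pos =>
          have hw2b : b.weight ≤ a₂.weight := wmono hr hwt hcase
          have hw12 : a₂.weight ≤ a₁.weight := wmono hr hwt h21
          have hba₁ : r b a₁ := by letI := hr; exact trans_of r hcase h21
          -- expansion subclaim
          have exp : ∀ e t : FormalComm X, FormalComm.IsBasic r e → FormalComm.IsBasic r t →
              r b t → b.weight + e.weight + t.weight = m + 2 →
              mk ⁅⁅b.eval, e.eval⁆, t.eval⁆ ∈ Clm := by
            intro e t he ht hbt hsum3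
            have hwe := weight_pos e
            have hwtp := weight_pos t
            have hwbt : b.weight ≤ t.weight := wmono hr hwt hbt
            set s := b.weight + e.weight with hs
            have hs2 : 2 ≤ s := by omega
            have hsm : s ≤ m + 1 := by omega
            -- expand the inner commutator into basics of weight s mod lcs s
            have hmem : ⁅b.eval, e.eval⁆ ∈
                Subgroup.closure (basicSet r s) ⊔ lowerCentralSeries F s := by
              have h0 : ⁅b.eval, e.eval⁆ ∈ lowerCentralSeries F (s-1) := by
                have := lcs_comm_le (e.weight - 1) (b.weight - 1)
                  (Subgroup.commutator_mem_commutator (eval_mem_lcs b) (eval_mem_lcs e))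
                exact lowerCentralSeries_antitone (by omega) this
              have := IH (s-1) (by omega) h0
              have he' : s - 1 + 1 = s := by omega
              rwa [he'] at this
            rw [← SetLike.mem_coe, Subgroup.mul_normal] at hmem
            obtain ⟨p, hp, ε, hε, hpe⟩ := hmem
            have hclole : Subgroup.closure (basicSet r s) ≤ lowerCentralSeries F (s-1) :=
              closure_basicSet_le (by omega)
            have hred : mk ⁅⁅b.eval, e.eval⁆, t.eval⁆ = mk ⁅p, t.eval⁆ := by
              rw [← hpe]
              rw [hbil (s-1) (t.weight - 1) (by omega) p ε t.eval (hclole hp)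
                (lowerCentralSeries_antitone (by omega) hε) (eval_mem_lcs t)]
              have : mk ⁅ε, t.eval⁆ = 1 := by
                apply hk
                have := lcs_comm_le (t.weight - 1) s
                  (Subgroup.commutator_mem_commutator hε (eval_mem_lcs t))
                exact lowerCentralSeries_antitone (by omega) this
              rw [this, mul_one]
            rw [hred]
            clear hred hpe hε
            induction hp using Subgroup.closure_induction with
            | mem u hu =>
              obtain ⟨β, hβ, hwβ, rfl⟩ := hu
              letI := hr
              rcases trichotomous_of r β t with hlt | heq | hgt
              · -- r β t : swap
                have hmain : mk ⁅t.eval, β.eval⁆ ∈ Clm := by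
                  apply IH1 (m + 2 - s) (by omega) (M β) t β ht hβ hlt (by omega) (by omega)
                    le_rfl
                have : mk ⁅β.eval, t.eval⁆ = (mk ⁅t.eval, β.eval⁆)⁻¹ := by
                  rw [← map_inv, commutatorElement_inv]
                rw [this]
                exact inv_mem hmain
              · subst heq
                simp only [commutatorElement_self, map_one]
                exact one_mem Clm
              · -- r t β
                by_cases hwtb : t.weight = b.weight
                · -- tie: use the second measure
                  apply IH2 (M t) ?_ β t hβ ht hgt (by omega) (by omega) le_rfl
                  calc M t < M b := hMlt b t hbt hwtb
                    _ ≤ μ₂ := hμ₂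
                · apply IH1 (m + 2 - t.weight) ?_ (M t) β t hβ ht hgt (by omega) (by omega)
                    le_rfl
                  omega
            | one =>
              simp only [commutatorElement_one_left, map_one]
              exact one_mem Clm
            | mul p₁ p₂ hp₁ hp₂ ihp₁ ihp₂ =>
              rw [hbil (s-1) (t.weight - 1) (by omega) p₁ p₂ t.eval (hclole hp₁)
                (hclole hp₂) (eval_mem_lcs t)]
              exact mul_mem ihp₁ ihp₂
            | inv p₁ hp₁ ihp₁ =>
              rw [hinvl (s-1) (t.weight - 1) (by omega) p₁ t.eval (hclole hp₁)
                (eval_mem_lcs t)]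
              exact inv_mem ihp₁
          -- apply the combination
          have K2 : mk ⁅⁅b.eval, a₁.eval⁆, a₂.eval⁆ ∈ Clm := by
            apply exp a₁ a₂ ha₁ ha₂ hcase
            simp only [FormalComm.weight] at hsum
            omega
          have K3 : mk ⁅⁅b.eval, a₂.eval⁆, a₁.eval⁆ ∈ Clm := by
            apply exp a₂ a₁ ha₂ ha₁ hba₁
            simp only [FormalComm.weight] at hsum
            omega
          have hgoal : mk ⁅⁅a₁.eval, a₂.eval⁆, b.eval⁆ ∈ Clm := by
            apply hcomb (a₁.weight - 1) (a₂.weight - 1) (b.weight - 1) ?_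
              a₁.eval a₂.eval b.eval (eval_mem_lcs a₁) (eval_mem_lcs a₂) (eval_mem_lcs b)
              K2 K3
            simp only [FormalComm.weight] at hsum
            omega
          simpa [FormalComm.eval] using hgoal
    -- unordered collection
    have collAll : ∀ a b : FormalComm X, FormalComm.IsBasic r a → FormalComm.IsBasic r b →
        a.weight + b.weight = m + 2 → mk ⁅a.eval, b.eval⁆ ∈ Clm := by
      intro a b ha hb hsum
      letI := hr
      rcases trichotomous_of r a b with hab | heq | hba
      · have hmain := coll (m+2) (M a) b a hb ha hab (by omega) (by omega) le_rfl
        have : mk ⁅a.eval, b.eval⁆ = (mk ⁅b.eval, a.eval⁆)⁻¹ := by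
          rw [← map_inv, commutatorElement_inv]
        rw [this]
        exact inv_mem hmain
      · subst heq
        simp only [commutatorElement_self, map_one]
        exact one_mem Clm
      · exact coll (m+2) (M b) a b ha hb hba hsum (by omega) le_rfl
    -- commutators of a basic of weight m+1 with arbitrary elements
    have c3 : ∀ t : FormalComm X, FormalComm.IsBasic r t → t.weight = m+1 →
        ∀ f : F, mk ⁅t.eval, f⁆ ∈ Clm := by
      intro t ht hwt' f
      have htev : t.eval ∈ lowerCentralSeries F m := eval_mem_lcs' t (by omega)
      induction f using FreeGroup.induction_on with
      | C1 =>
        simp only [commutatorElement_one_right, map_one]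
        exact one_mem Clm
      | of x =>
        show mk ⁅t.eval, FreeGroup.of x⁆ ∈ Clm
        have := collAll t (.of x) ht (FormalComm.IsBasic.of x) (by
          simp only [FormalComm.weight]; omega)
        simpa [FormalComm.eval] using this
      | inv_of x ihx =>
        show mk ⁅t.eval, (FreeGroup.of x)⁻¹⁆ ∈ Clm
        rw [hinvr m 0 (by omega) t.eval (FreeGroup.of x) htev (Subgroup.mem_top _)]
        exact inv_mem ihx
      | mul f₁ f₂ ih₁ ih₂ =>
        rw [hbilr m 0 (by omega) t.eval f₁ f₂ htev (Subgroup.mem_top _)]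
        exact mul_mem ih₁ ih₂
    -- commutators of closure elements with arbitrary elements
    have hclole1 : Subgroup.closure (basicSet r (m+1)) ≤ lowerCentralSeries F m := by
      have := closure_basicSet_le (r := r) (w := m+1) (by omega)
      simpa using this
    have c2 : ∀ p, p ∈ Subgroup.closure (basicSet r (m+1)) → ∀ f : F, mk ⁅p, f⁆ ∈ Clm := by
      intro p hp f
      induction hp using Subgroup.closure_induction with
      | mem u hu =>
        obtain ⟨β, hβ, hwβ, rfl⟩ := hu
        exact c3 β hβ hwβ f
      | one =>
        simp only [commutatorElement_one_left, map_one]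
        exact one_mem Clm
      | mul p₁ p₂ hp₁ hp₂ ihp₁ ihp₂ =>
        rw [hbil m 0 (by omega) p₁ p₂ f (hclole1 hp₁) (hclole1 hp₂) (Subgroup.mem_top _)]
        exact mul_mem ihp₁ ihp₂
      | inv p₁ hp₁ ihp₁ =>
        rw [hinvl m 0 (by omega) p₁ f (hclole1 hp₁) (Subgroup.mem_top _)]
        exact inv_mem ihp₁
    -- main: every element of lcs (m+1) maps into Clm
    have hS : lowerCentralSeries F (m+1) ≤ Clm.comap mk := by
      rw [show lowerCentralSeries F (m+1) = ⁅lowerCentralSeries F m, ⊤⁆ from rfl,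
        Subgroup.commutator_le]
      intro p hp f _
      have hpm := IH m (by omega) hp
      rw [← SetLike.mem_coe, Subgroup.mul_normal] at hpm
      obtain ⟨p₀, hp₀, ε, hε, hpe⟩ := hpm
      rw [Subgroup.mem_comap, ← hpe]
      rw [hbil m 0 (by omega) p₀ ε f (hclole1 hp₀)
        (lowerCentralSeries_antitone (by omega) hε) (Subgroup.mem_top _)]
      have hz : mk ⁅ε, f⁆ = 1 := by
        apply hk
        exact lcs_comm_le 0 (m+1) (Subgroup.commutator_mem_commutator hε (Subgroup.mem_top f))
      rw [hz, mul_one]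
      exact c2 p₀ hp₀ f
    -- conclude
    intro g hg
    obtain ⟨y, hy, hmk⟩ := hS hg
    have hker : y⁻¹ * g ∈ N := by
      rw [← QuotientGroup.eq_one_iff (G := F) (N := N)]
      show mk (y⁻¹ * g) = 1
      rw [map_mul, map_inv, hmk]
      simp
    have : g = y * (y⁻¹ * g) := (mul_inv_cancel_left y g).symm
    rw [this]
    exact mul_mem (Subgroup.mem_sup_left hy) (Subgroup.mem_sup_right hker)

theorem comm_mul_left_commute {Q : Type*} [Group Q] {a b c : Q}
    (h : Commute ⁅b,c⁆ a) : ⁅a*b,c⁆ = ⁅b,c⁆ * ⁅a,c⁆ := by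
  have e : ⁅a*b,c⁆ = a * ⁅b,c⁆ * a⁻¹ * ⁅a,c⁆ := by group
  have e2 : a * ⁅b,c⁆ * a⁻¹ = ⁅b,c⁆ := by
    have := h.eq
    rw [← this]; group
  rw [e, e2]

theorem comm_mul_right_commute {Q : Type*} [Group Q] {a b c : Q}
    (h : Commute ⁅a,c⁆ b) : ⁅a,b*c⁆ = ⁅a,b⁆ * ⁅a,c⁆ := by
  have e : ⁅a,b*c⁆ = ⁅a,b⁆ * (b * ⁅a,c⁆ * b⁻¹) := by group
  have e2 : b * ⁅a,c⁆ * b⁻¹ = ⁅a,c⁆ := by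
    have := h.eq
    rw [← this]; group
  rw [e, e2]

theorem comm_inv_left_commute {Q : Type*} [Group Q] {a c : Q}
    (h : Commute ⁅a,c⁆ a) : ⁅a⁻¹,c⁆ = ⁅a,c⁆⁻¹ := by
  have := comm_mul_left_commute (a := a⁻¹) (b := a) (c := c) h.inv_right
  rw [inv_mul_cancel, commutatorElement_one_left] at this
  exact (eq_inv_of_mul_eq_one_right this.symm)

theorem comm_inv_right_commute {Q : Type*} [Group Q] {a c : Q}
    (h : Commute ⁅a,c⁆ c) : ⁅a,c⁻¹⁆ = ⁅a,c⁆⁻¹ := by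
  have := comm_mul_right_commute (a := a) (b := c⁻¹) (c := c) h.inv_right
  rw [inv_mul_cancel, commutatorElement_one_right] at this
  exact (eq_inv_of_mul_eq_one_left this.symm)

/-- Basic commutators with weight in the interval `[c+1, c+j]`. -/
def rangeBasicSet (r : FormalComm X → FormalComm X → Prop) (c j : ℕ) : Set (FreeGroup X) :=
  {g | ∃ t : FormalComm X, FormalComm.IsBasic r t ∧ c + 1 ≤ t.weight ∧ t.weight ≤ c + j ∧
    t.eval = g}

theorem closure_rangeBasicSet_le (c j : ℕ) :
    Subgroup.closure (rangeBasicSet r c j) ≤ lowerCentralSeries (FreeGroup X) c := by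
  rw [Subgroup.closure_le]
  rintro g ⟨t, _, h1, h2, rfl⟩
  exact eval_mem_lcs' t (by omega)

theorem hallIter [Finite X] (hr : IsStrictTotalOrder (FormalComm X) r)
    (hwt : ∀ a b : FormalComm X, a.weight < b.weight → r a b) (c : ℕ) :
    ∀ j, lowerCentralSeries (FreeGroup X) c ≤
      Subgroup.closure (rangeBasicSet r c j) ⊔ lowerCentralSeries (FreeGroup X) (c+j) := by
  intro j
  induction j with
  | zero => exact le_sup_right
  | succ j ih =>
    refine le_trans ih (sup_le ?_ ?_)
    · refine le_trans (Subgroup.closure_mono ?_) le_sup_left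
      rintro g ⟨t, h1, h2, h3, rfl⟩
      exact ⟨t, h1, h2, by omega, rfl⟩
    · refine le_trans (hallStep hr hwt (c+j)) (sup_le ?_ ?_)
      · refine le_trans (Subgroup.closure_mono ?_) le_sup_left
        rintro g ⟨t, h1, h2, rfl⟩
        exact ⟨t, h1, by omega, by omega, rfl⟩
      · exact le_trans (lowerCentralSeries_antitone (by omega)) le_sup_right

/-- The generating set of the statement. -/
def Sset (r : FormalComm X → FormalComm X → Prop) (c₁ c₂ n : ℕ) : Set (FreeGroup X) :=
  {g | ∃ β α : FormalComm X,
    g = ⁅β.eval, α.eval⁆ ∧ FormalComm.IsBasic r β ∧ FormalComm.IsBasic r α ∧ r α β ∧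
    c₁ + 1 ≤ β.weight ∧ β.weight ≤ c₁ + n ∧ c₂ + 1 ≤ α.weight ∧ α.weight ≤ c₂ + n}

/-- The modulus subgroup `H` of the statement. -/
def Hsub (X : Type) (c₁ c₂ n : ℕ) : Subgroup (FreeGroup X) :=
  ⁅lowerCentralSeries (FreeGroup X) (c₁ + n), lowerCentralSeries (FreeGroup X) c₂⁆ ⊔
    ⁅lowerCentralSeries (FreeGroup X) (c₂ + n), lowerCentralSeries (FreeGroup X) c₁⁆

instance Hsub_normal (c₁ c₂ n : ℕ) : (Hsub X c₁ c₂ n).Normal := by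
  unfold Hsub
  infer_instance

theorem core [Finite X] (hr : IsStrictTotalOrder (FormalComm X) r)
    (hwt : ∀ a b : FormalComm X, a.weight < b.weight → r a b)
    (c₁ c₂ n : ℕ) (hc : c₂ ≤ c₁) (hc₂ : 1 ≤ c₂) (hn : 1 ≤ n) (hnc : n ≤ c₂ + 1) :
    ⁅lowerCentralSeries (FreeGroup X) c₁, lowerCentralSeries (FreeGroup X) c₂⁆ ≤
      Subgroup.closure (Sset r c₁ c₂ n) ⊔ Hsub X c₁ c₂ n := by
  classical
  set F := FreeGroup X
  set Hs := Hsub X c₁ c₂ n with hHs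
  set mk : F →* F ⧸ Hs := QuotientGroup.mk' Hs with hmkdef
  set ClS : Subgroup (F ⧸ Hs) := Subgroup.map mk (Subgroup.closure (Sset r c₁ c₂ n)) with hClS
  have hk : ∀ u : F, u ∈ Hs → mk u = 1 := fun u hu => (QuotientGroup.eq_one_iff u).mpr hu
  have hH1 : ⁅lowerCentralSeries F (c₁+n), lowerCentralSeries F c₂⁆ ≤ Hs := le_sup_left
  have hH2 : ⁅lowerCentralSeries F (c₂+n), lowerCentralSeries F c₁⁆ ≤ Hs := le_sup_right
  have hH3 : ⁅lowerCentralSeries F (c₁+c₂+1), lowerCentralSeries F c₁⁆ ≤ Hs :=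
    le_trans (Subgroup.commutator_mono (lowerCentralSeries_antitone (by omega)) le_rfl) hH2
  have hH4 : ⁅lowerCentralSeries F (c₁+c₂+1), lowerCentralSeries F c₂⁆ ≤ Hs :=
    le_trans (Subgroup.commutator_mono (lowerCentralSeries_antitone (by omega)) le_rfl) hH1
  have hcomm12 : ∀ u v w : F, u ∈ lowerCentralSeries F c₁ → v ∈ lowerCentralSeries F c₂ →
      (w ∈ lowerCentralSeries F c₁ ∨ w ∈ lowerCentralSeries F c₂) →
      Commute (mk ⁅u,v⁆) (mk w) := by
    intro u v w hu hv hw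
    apply commutatorElement_eq_one_iff_commute.mp
    rw [← map_commutatorElement]
    apply hk
    have huv : ⁅u,v⁆ ∈ lowerCentralSeries F (c₁+c₂+1) := lcs_comm_le c₂ c₁
      (Subgroup.commutator_mem_commutator hu hv)
    rcases hw with hw | hw
    · exact hH3 (Subgroup.commutator_mem_commutator huv hw)
    · exact hH4 (Subgroup.commutator_mem_commutator huv hw)
  rw [Subgroup.commutator_le]
  intro g hg h hh
  suffices hQ : mk ⁅g,h⁆ ∈ ClS by
    obtain ⟨y, hy, hyeq⟩ := hQ
    have hker : y⁻¹ * ⁅g,h⁆ ∈ Hs := by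
      rw [← QuotientGroup.eq_one_iff (G := F) (N := Hs)]
      show mk (y⁻¹ * ⁅g,h⁆) = 1
      rw [map_mul, map_inv, hyeq]
      exact inv_mul_cancel _
    have : ⁅g,h⁆ = y * (y⁻¹ * ⁅g,h⁆) := (mul_inv_cancel_left y _).symm
    rw [this]
    exact mul_mem (Subgroup.mem_sup_left hy) (Subgroup.mem_sup_right hker)
  -- decompose g and h using iterated Hall expansion
  have hgd := hallIter hr hwt c₁ n hg
  have hhd := hallIter hr hwt c₂ n hh
  rw [← SetLike.mem_coe, Subgroup.mul_normal] at hgd hhd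
  obtain ⟨p, hp, ε, hε, hpe⟩ := hgd
  obtain ⟨q, hq, δ, hδ, hqe⟩ := hhd
  have hW1 : Subgroup.closure (rangeBasicSet r c₁ n) ≤ lowerCentralSeries F c₁ :=
    closure_rangeBasicSet_le c₁ n
  have hW2 : Subgroup.closure (rangeBasicSet r c₂ n) ≤ lowerCentralSeries F c₂ :=
    closure_rangeBasicSet_le c₂ n
  -- step 1 : kill ε
  have e1 : mk ⁅ε, h⁆ = 1 := by
    apply hk
    exact hH1 (Subgroup.commutator_mem_commutator hε hh)
  have step1 : mk ⁅g, h⁆ = mk ⁅p, h⁆ := by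
    rw [← hpe, map_commutatorElement, map_commutatorElement, map_mul]
    rw [comm_mul_left_commute (by rw [← map_commutatorElement, e1]; exact Commute.one_left _)]
    rw [← map_commutatorElement, ← map_commutatorElement, e1, one_mul]
  -- step 2 : kill δ
  have e2 : mk ⁅p, δ⁆ = 1 := by
    apply hk
    apply hH2
    rw [Subgroup.commutator_comm]
    exact Subgroup.commutator_mem_commutator (hW1 hp) hδ
  have step2 : mk ⁅p, h⁆ = mk ⁅p, q⁆ := by
    rw [← hqe, map_commutatorElement, map_commutatorElement, map_mul]
    rw [comm_mul_right_commute (by rw [← map_commutatorElement, e2]; exact Commute.one_left _)]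
    rw [← map_commutatorElement, ← map_commutatorElement, e2, mul_one]
  rw [step1, step2]
  -- step 3 : closure induction
  clear step1 step2 e1 e2 hpe hqe hε hδ hg hh
  induction hp using Subgroup.closure_induction with
  | mem u hu =>
    induction hq using Subgroup.closure_induction with
    | mem v hv =>
      obtain ⟨β, hβ, hβ1, hβ2, rfl⟩ := hu
      obtain ⟨α, hα, hα1, hα2, rfl⟩ := hv
      letI := hr
      rcases trichotomous_of r α β with hab | heq | hba
      · exact Subgroup.mem_map_of_mem mk (Subgroup.subset_closure
          ⟨β, α, rfl, hβ, hα, hab, by omega, by omega, by omega, by omega⟩)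
      · subst heq
        simp only [commutatorElement_self, map_one]
        exact one_mem ClS
      · have hwαβ : β.weight ≤ α.weight := wmono hr hwt hba
        have hmain : mk ⁅α.eval, β.eval⁆ ∈ ClS :=
          Subgroup.mem_map_of_mem mk (Subgroup.subset_closure
            ⟨α, β, rfl, hα, hβ, hba, by omega, by omega, by omega, by omega⟩)
        have : mk ⁅β.eval, α.eval⁆ = (mk ⁅α.eval, β.eval⁆)⁻¹ := by
          rw [← map_inv, commutatorElement_inv]
        rw [this]
        exact inv_mem hmain
    | one =>
      simp only [commutatorElement_one_right, map_one]
      exact one_mem ClS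
    | mul q₁ q₂ hq₁ hq₂ ihq₁ ihq₂ =>
      have hu' : u ∈ lowerCentralSeries F c₁ := hW1 (Subgroup.subset_closure hu)
      rw [map_commutatorElement, map_mul]
      rw [comm_mul_right_commute (by
        rw [← map_commutatorElement];
        exact hcomm12 u q₂ q₁ hu' (hW2 hq₂) (Or.inr (hW2 hq₁)))]
      rw [← map_commutatorElement, ← map_commutatorElement] at *
      exact mul_mem ihq₁ ihq₂
    | inv q₁ hq₁ ihq₁ =>
      have hu' : u ∈ lowerCentralSeries F c₁ := hW1 (Subgroup.subset_closure hu)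
      rw [map_commutatorElement, map_inv]
      rw [comm_inv_right_commute (by
        rw [← map_commutatorElement]
        exact hcomm12 u q₁ q₁ hu' (hW2 hq₁) (Or.inr (hW2 hq₁)))]
      rw [← map_commutatorElement] at *
      exact inv_mem ihq₁
  | one =>
    simp only [commutatorElement_one_left, map_one]
    exact one_mem ClS
  | mul p₁ p₂ hp₁ hp₂ ihp₁ ihp₂ =>
    have hq' : q ∈ lowerCentralSeries F c₂ := hW2 hq
    rw [map_commutatorElement, map_mul]
    rw [comm_mul_left_commute (by
      rw [← map_commutatorElement]
      exact hcomm12 p₂ q p₁ (hW1 hp₂) hq' (Or.inl (hW1 hp₁)))]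
    rw [← map_commutatorElement, ← map_commutatorElement] at *
    exact mul_mem ihp₂ ihp₁
  | inv p₁ hp₁ ihp₁ =>
    have hq' : q ∈ lowerCentralSeries F c₂ := hW2 hq
    rw [map_commutatorElement, map_inv]
    rw [comm_inv_left_commute (by
      rw [← map_commutatorElement]
      exact hcomm12 p₁ q p₁ (hW1 hp₁) hq' (Or.inl (hW1 hp₁)))]
    rw [← map_commutatorElement] at *
    exact inv_mem ihp₁

/-- Relabelling of formal commutators. -/
def mapFC {X Y : Type} (f : X → Y) : FormalComm X → FormalComm Y
  | .of x => .of (f x)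
  | .comm b a => .comm (mapFC f b) (mapFC f a)

theorem weight_mapFC {X Y : Type} (f : X → Y) (t : FormalComm X) :
    (mapFC f t).weight = t.weight := by
  induction t with
  | of x => rfl
  | comm b a ihb iha => simp only [mapFC, FormalComm.weight, ihb, iha]

theorem eval_mapFC {X Y : Type} (f : X → Y) (t : FormalComm X) :
    (mapFC f t).eval = FreeGroup.map f t.eval := by
  induction t with
  | of x => simp [mapFC, FormalComm.eval, FreeGroup.map.of]
  | comm b a ihb iha =>
    simp only [mapFC, FormalComm.eval, ihb, iha, map_commutatorElement]

theorem mapFC_injective {X Y : Type} {f : X → Y} (hf : Function.Injective f) :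
    Function.Injective (mapFC f) := by
  intro a
  induction a with
  | of x =>
    intro b h
    cases b with
    | of y =>
      simp only [mapFC] at h
      injection h with h1
      rw [hf h1]
    | comm c d => simp [mapFC] at h
  | comm b a ihb iha =>
    intro c h
    cases c with
    | of y => simp [mapFC] at h
    | comm c d =>
      simp only [mapFC] at h
      injection h with h1 h2
      rw [ihb h1, iha h2]

theorem isBasic_mapFC {X Y : Type} (f : X → Y) (r : FormalComm Y → FormalComm Y → Prop)
    {t : FormalComm X} (h : FormalComm.IsBasic (fun a b => r (mapFC f a) (mapFC f b)) t) :
    FormalComm.IsBasic r (mapFC f t) := by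
  induction h with
  | of x => exact FormalComm.IsBasic.of (f x)
  | comm b a hb ha hrel hcond ihb iha =>
    refine FormalComm.IsBasic.comm _ _ ihb iha hrel ?_
    intro b₁ b₂ heq
    cases b with
    | of x => simp [mapFC] at heq
    | comm c d =>
      simp only [mapFC] at heq
      injection heq with h1 h2
      subst h2
      exact hcond c d rfl

/-- Inclusion of the free group on a finite subset. -/
def inclHom {X : Type} (s : Finset X) : FreeGroup {x // x ∈ s} →* FreeGroup X :=
  FreeGroup.map Subtype.val

theorem inclHom_comp {X : Type} {s t : Finset X} (h : s ⊆ t) (g : FreeGroup {x // x ∈ s}) :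
    inclHom t (FreeGroup.map (fun y : {x // x ∈ s} => (⟨y.1, h y.2⟩ : {x // x ∈ t})) g) =
      inclHom s g := by
  have : (inclHom t).comp
      (FreeGroup.map (fun y : {x // x ∈ s} => (⟨y.1, h y.2⟩ : {x // x ∈ t}))) = inclHom s := by
    apply FreeGroup.ext_hom
    intro y
    simp [inclHom, FreeGroup.map.of]
  rw [← this]
  rfl

theorem range_mono' {X : Type} {s t : Finset X} (h : s ⊆ t) :
    (inclHom (X := X) s).range ≤ (inclHom t).range := by
  rintro g ⟨g₀, rfl⟩
  exact ⟨FreeGroup.map _ g₀, inclHom_comp h g₀⟩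

theorem exists_support {X : Type} (g : FreeGroup X) :
    ∃ s : Finset X, g ∈ (inclHom s).range := by
  classical
  induction g using FreeGroup.induction_on with
  | C1 => exact ⟨∅, one_mem _⟩
  | of x => exact ⟨{x}, ⟨FreeGroup.of ⟨x, Finset.mem_singleton_self x⟩, FreeGroup.map.of⟩⟩
  | inv_of x ih =>
    obtain ⟨s, hs⟩ := ih
    exact ⟨s, inv_mem hs⟩
  | mul a b iha ihb =>
    obtain ⟨s, hs⟩ := iha
    obtain ⟨t, ht⟩ := ihb
    exact ⟨s ∪ t, mul_mem (range_mono' Finset.subset_union_left hs)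
      (range_mono' Finset.subset_union_right ht)⟩

end HallAux

open HallAux

/-- Lemma 2.6: for a free group `F` on `X` and `n - 1 ≤ c₂ ≤ c₁`, the subgroup
`[γ_{c₁+1}(F), γ_{c₂+1}(F)]` is generated, modulo
`H = [γ_{c₁+n+1}(F), γ_{c₂+1}(F)]·[γ_{c₂+n+1}(F), γ_{c₁+1}(F)]`, by the commutators
`[β,α]` with `β > α` basic, `c₁+1 ≤ wt(β) ≤ c₁+n`, `c₂+1 ≤ wt(α) ≤ c₂+n`. -/
theorem commutator_gamma_generated_mod_H {X : Type}
    (r : FormalComm X → FormalComm X → Prop)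
    (hr : IsStrictTotalOrder (FormalComm X) r)
    (hwt : ∀ a b : FormalComm X, a.weight < b.weight → r a b)
    (c₁ c₂ n : ℕ) (hc : c₂ ≤ c₁) (hc₂ : 1 ≤ c₂) (hn : 1 ≤ n) (hnc : n ≤ c₂ + 1) :
    let F := FreeGroup X
    let H : Subgroup F :=
      ⁅(⊤ : Subgroup F).lowerCentralSeries (c₁ + n), (⊤ : Subgroup F).lowerCentralSeries c₂⁆ ⊔
        ⁅(⊤ : Subgroup F).lowerCentralSeries (c₂ + n), (⊤ : Subgroup F).lowerCentralSeries c₁⁆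
    let S : Set F := {g | ∃ β α : FormalComm X,
      g = ⁅β.eval, α.eval⁆ ∧ FormalComm.IsBasic r β ∧ FormalComm.IsBasic r α ∧ r α β ∧
      c₁ + 1 ≤ β.weight ∧ β.weight ≤ c₁ + n ∧ c₂ + 1 ≤ α.weight ∧ α.weight ≤ c₂ + n}
    ⁅(⊤ : Subgroup F).lowerCentralSeries c₁, (⊤ : Subgroup F).lowerCentralSeries c₂⁆ ⊔ H = Subgroup.closure S ⊔ H := by
  intro F H S
  apply le_antisymm
  · refine sup_le ?_ le_sup_right
    rw [Subgroup.commutator_le]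
    intro g hg h hh
    classical
    -- find a common finite support
    obtain ⟨s₁, hs₁⟩ := exists_support g
    obtain ⟨s₂, hs₂⟩ := exists_support h
    obtain ⟨g₀, hg₀eq⟩ := range_mono' (Finset.subset_union_left (s₂ := s₂)) hs₁
    obtain ⟨h₀, hh₀eq⟩ := range_mono' (Finset.subset_union_right (s₁ := s₁)) hs₂
    -- retraction
    set ρ : FreeGroup X →* FreeGroup {x // x ∈ s₁ ∪ s₂} :=
      FreeGroup.lift (fun x => if hx : x ∈ s₁ ∪ s₂ then
        FreeGroup.of (⟨x, hx⟩ : {x // x ∈ s₁ ∪ s₂}) else 1) with hρ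
    have hρι : ∀ g₀ : FreeGroup {x // x ∈ s₁ ∪ s₂}, ρ (inclHom (s₁ ∪ s₂) g₀) = g₀ := by
      have hcomp : ρ.comp (inclHom (s₁ ∪ s₂)) = MonoidHom.id _ := by
        apply FreeGroup.ext_hom
        intro y
        have hy := y.2
        simp only [hρ, inclHom, MonoidHom.coe_comp, Function.comp_apply, FreeGroup.map.of,
          FreeGroup.lift_apply_of, MonoidHom.id_apply, dif_pos hy]
      intro g₀
      have := DFunLike.congr_fun hcomp g₀
      simpa using this
    -- memberships downstairs
    have hg₀ : g₀ ∈ lowerCentralSeries (FreeGroup {x // x ∈ s₁ ∪ s₂}) c₁ := by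
      have h1 := lowerCentralSeries.map ρ c₁ (Subgroup.mem_map_of_mem ρ hg)
      have h2 : ρ g = g₀ := by
        conv_lhs => rw [← hg₀eq]
        exact hρι g₀
      rwa [h2] at h1
    have hh₀ : h₀ ∈ lowerCentralSeries (FreeGroup {x // x ∈ s₁ ∪ s₂}) c₂ := by
      have h1 := lowerCentralSeries.map ρ c₂ (Subgroup.mem_map_of_mem ρ hh)
      have h2 : ρ h = h₀ := by
        conv_lhs => rw [← hh₀eq]
        exact hρι h₀
      rwa [h2] at h1
    -- transported order
    set φ : FormalComm {x // x ∈ s₁ ∪ s₂} → FormalComm X := mapFC Subtype.val with hφ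
    set r₀ : FormalComm {x // x ∈ s₁ ∪ s₂} → FormalComm {x // x ∈ s₁ ∪ s₂} → Prop :=
      fun a b => r (φ a) (φ b) with hr₀def
    have hφinj : Function.Injective φ := mapFC_injective Subtype.val_injective
    letI := hr
    haveI ht1 : IsTrichotomous (FormalComm {x // x ∈ s₁ ∪ s₂}) r₀ := ⟨fun a b h1 h2 => by
      rcases trichotomous_of r (φ a) (φ b) with h' | h' | h'
      · exact absurd h' h1
      · exact hφinj h'
      · exact absurd h' h2⟩
    haveI ht2 : IsIrrefl (FormalComm {x // x ∈ s₁ ∪ s₂}) r₀ := ⟨fun a => irrefl_of r (φ a)⟩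
    haveI ht3 : IsTrans (FormalComm {x // x ∈ s₁ ∪ s₂}) r₀ :=
      ⟨fun a b c hab hbc => trans_of r hab hbc⟩
    haveI ht4 : IsStrictOrder (FormalComm {x // x ∈ s₁ ∪ s₂}) r₀ := ⟨⟩
    have hr₀ : IsStrictTotalOrder (FormalComm {x // x ∈ s₁ ∪ s₂}) r₀ := ⟨⟩
    have hwt₀ : ∀ a b : FormalComm {x // x ∈ s₁ ∪ s₂}, a.weight < b.weight → r₀ a b := by
      intro a b hab
      exact hwt (φ a) (φ b) (by rw [hφ, weight_mapFC, weight_mapFC]; exact hab)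
    -- apply the finite core lemma
    have hcore := core (r := r₀) hr₀ hwt₀ c₁ c₂ n hc hc₂ hn hnc
      (Subgroup.commutator_mem_commutator hg₀ hh₀)
    -- push forward
    have heq : ⁅g, h⁆ = inclHom (s₁ ∪ s₂) ⁅g₀, h₀⁆ := by
      rw [map_commutatorElement, hg₀eq, hh₀eq]
    rw [heq]
    have hup := Subgroup.mem_map_of_mem (inclHom (s₁ ∪ s₂)) hcore
    rw [Subgroup.map_sup] at hup
    refine (sup_le ?_ ?_ : _ ≤ Subgroup.closure S ⊔ H) hup
    · rw [MonoidHom.map_closure]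
      refine le_trans (Subgroup.closure_mono ?_) le_sup_left
      rintro x ⟨y, ⟨β, α, rfl, hβ, hα, hαβ, w1, w2, w3, w4⟩, rfl⟩
      refine ⟨φ β, φ α, ?_, isBasic_mapFC _ _ hβ, isBasic_mapFC _ _ hα, hαβ, ?_, ?_, ?_, ?_⟩
      · show inclHom (s₁ ∪ s₂) ⁅β.eval, α.eval⁆ = ⁅(φ β).eval, (φ α).eval⁆
        rw [map_commutatorElement, hφ, eval_mapFC, eval_mapFC]
        rfl
      · rw [hφ, weight_mapFC]; exact w1
      · rw [hφ, weight_mapFC]; exact w2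
      · rw [hφ, weight_mapFC]; exact w3
      · rw [hφ, weight_mapFC]; exact w4
    · refine le_trans ?_ le_sup_right
      show Subgroup.map (inclHom (s₁ ∪ s₂)) (Hsub {x // x ∈ s₁ ∪ s₂} c₁ c₂ n) ≤ H
      rw [Hsub, Subgroup.map_sup, Subgroup.map_commutator, Subgroup.map_commutator]
      refine sup_le (le_trans ?_ le_sup_left) (le_trans ?_ le_sup_right)
      · exact Subgroup.commutator_mono (lowerCentralSeries.map _ _)
          (lowerCentralSeries.map _ _)
      · exact Subgroup.commutator_mono (lowerCentralSeries.map _ _)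
          (lowerCentralSeries.map _ _)
  · refine sup_le (le_trans ?_ le_sup_left) le_sup_right
    rw [Subgroup.closure_le]
    rintro x ⟨β, α, rfl, hβ, hα, hαβ, w1, w2, w3, w4⟩
    exact Subgroup.commutator_mem_commutator (eval_mem_lcs' β (by omega))
      (eval_mem_lcs' α (by omega))
end

section
/- Let F be a free group and n−1 ≤ c₂ ≤ c₁. Then [γ_{c₁+n+1}(F), γ_{c₂+1}(F)] is generated modulo γ_{c₁+c₂+2n+2}(F) by the commutators [β,α] with β, α basic commutators, β > α, wt(β) ≥ c₁+n+1, wt(α) ≥ c₂+1, and wt(β)+wt(α) ≤ 2n+c₁+c₂+1. -/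
open scoped commutatorElement

open Subgroup



/-- `⁅γ_m, γ_n⁆ ≤ γ_{m+n+1}` (Mathlib indexing). -/
theorem lcs_comm_le (G : Type*) [Group G] :
    ∀ n m : ℕ, ⁅(⊤ : Subgroup G).lowerCentralSeries m, (⊤ : Subgroup G).lowerCentralSeries n⁆ ≤
      (⊤ : Subgroup G).lowerCentralSeries (m + n + 1) := by
  intro n
  induction n with
  | zero =>
    intro m
    have : (⊤ : Subgroup G).lowerCentralSeries (m + 1) = ⁅(⊤ : Subgroup G).lowerCentralSeries m, ⊤⁆ := rfl
    rw [show m + 0 + 1 = m + 1 by omega, this]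
    exact commutator_mono le_rfl le_top
  | succ n IH =>
    intro m
    set N := (⊤ : Subgroup G).lowerCentralSeries (m + (n + 1) + 1) with hN
    haveI : N.Normal := Subgroup.lowerCentralSeries_normal _ _
    set f := QuotientGroup.mk' N with hf
    have hker : f.ker = N := QuotientGroup.ker_mk' N
    have hst : Function.Surjective f := QuotientGroup.mk'_surjective N
    rw [← hker, ← Subgroup.map_eq_bot_iff, Subgroup.map_commutator]
    have hmapbot : ∀ H : Subgroup G, H ≤ N → Subgroup.map f H = ⊥ := by
      intro H hH
      rw [Subgroup.map_eq_bot_iff, hker]; exact hH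
    have key : ⁅⁅Subgroup.map f ((⊤ : Subgroup G).lowerCentralSeries m), Subgroup.map f ((⊤ : Subgroup G).lowerCentralSeries n)⁆, (⊤ : Subgroup (G ⧸ N))⁆ = ⊥ := by
      rw [← Subgroup.map_commutator, ← Subgroup.map_top_of_surjective f hst,
        ← Subgroup.map_commutator]
      apply hmapbot
      calc ⁅⁅(⊤ : Subgroup G).lowerCentralSeries m, (⊤ : Subgroup G).lowerCentralSeries n⁆, (⊤ : Subgroup G)⁆
          ≤ ⁅(⊤ : Subgroup G).lowerCentralSeries (m + n + 1), (⊤ : Subgroup G)⁆ := by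
            exact commutator_mono (IH m) le_rfl
        _ ≤ N := by
            have : (⊤ : Subgroup G).lowerCentralSeries (m + n + 1 + 1) =
              ⁅(⊤ : Subgroup G).lowerCentralSeries (m + n + 1), ⊤⁆ := rfl
            rw [← this, hN]
            exact Subgroup.lowerCentralSeries_antitone _ (by omega)
    have key2 : ⁅⁅(⊤ : Subgroup (G ⧸ N)), Subgroup.map f ((⊤ : Subgroup G).lowerCentralSeries m)⁆, Subgroup.map f ((⊤ : Subgroup G).lowerCentralSeries n)⁆ = ⊥ := by
      rw [← Subgroup.map_top_of_surjective f hst, ← Subgroup.map_commutator,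
        ← Subgroup.map_commutator]
      apply hmapbot
      calc ⁅⁅(⊤ : Subgroup G), (⊤ : Subgroup G).lowerCentralSeries m⁆, (⊤ : Subgroup G).lowerCentralSeries n⁆
          ≤ ⁅(⊤ : Subgroup G).lowerCentralSeries (m + 1), (⊤ : Subgroup G).lowerCentralSeries n⁆ := by
            refine commutator_mono ?_ le_rfl
            refine (commutator_comm _ _).le.trans ?_
            have : (⊤ : Subgroup G).lowerCentralSeries (m + 1) = ⁅(⊤ : Subgroup G).lowerCentralSeries m, ⊤⁆ := rfl
            rw [this]
        _ ≤ N := by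
            have := IH (m + 1)
            rw [hN]
            exact this.trans (Subgroup.lowerCentralSeries_antitone _ (by omega))
    -- three subgroups lemma
    have h3 := commutator_commutator_eq_bot_of_rotate key2 key
    -- h3 : ⁅⁅map f γn, ⊤⁆, map f γm⁆ = ⊥
    rw [commutator_comm]
    have hsucc : Subgroup.map f ((⊤ : Subgroup G).lowerCentralSeries (n + 1)) =
        ⁅Subgroup.map f ((⊤ : Subgroup G).lowerCentralSeries n), ⊤⁆ := by
      have : (⊤ : Subgroup G).lowerCentralSeries (n + 1) = ⁅(⊤ : Subgroup G).lowerCentralSeries n, ⊤⁆ := rfl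
      rw [this, Subgroup.map_commutator, Subgroup.map_top_of_surjective f hst]
    rw [hsucc, h3]


section Expand

variable {G : Type*} [Group G]

private lemma comm_mul_left (g₁ g₂ h : G) :
    ⁅g₁ * g₂, h⁆ = ⁅g₁, ⁅g₂, h⁆⁆ * ⁅g₂, h⁆ * ⁅g₁, h⁆ := by
  simp only [commutatorElement_def]; group

private lemma comm_inv_left (g h : G) :
    ⁅g⁻¹, h⁆ = ⁅g, h⁆⁻¹ * ⁅⁅g, h⁆, g⁻¹⁆ := by
  simp only [commutatorElement_def]; group

private lemma comm_mul_right (g h₁ h₂ : G) :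
    ⁅g, h₁ * h₂⁆ = ⁅g, h₁⁆ * ⁅h₁, ⁅g, h₂⁆⁆ * ⁅g, h₂⁆ := by
  simp only [commutatorElement_def]; group

private lemma comm_inv_right (g h : G) :
    ⁅g, h⁻¹⁆ = ⁅g, h⁆⁻¹ * ⁅⁅g, h⁆, h⁻¹⁆ := by
  simp only [commutatorElement_def]; group

/-- Bilinear expansion of commutators of subgroup closures, with absorbing term. -/
theorem comm_mem_of_closure {U V T : Subgroup G} {P Q : Set G}
    (hPU : P ⊆ U) (hQV : Q ⊆ V)
    (habs : ⁅⁅U, V⁆, U ⊔ V⁆ ≤ T)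
    (hpq : ∀ p ∈ P, ∀ q ∈ Q, ⁅p, q⁆ ∈ T) :
    ∀ g ∈ Subgroup.closure P, ∀ h ∈ Subgroup.closure Q, ⁅g, h⁆ ∈ T := by
  have hPU' : Subgroup.closure P ≤ U := (closure_le U).mpr hPU
  have hQV' : Subgroup.closure Q ≤ V := (closure_le V).mpr hQV
  have habs1 : ∀ u₁ u₂ v : G, (u₁ ∈ U ∨ u₁ ∈ V) → u₂ ∈ U → v ∈ V → ⁅u₁, ⁅u₂, v⁆⁆ ∈ T := by
    intro u₁ u₂ v h1 h2 h3
    refine habs ?_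
    rw [← commutatorElement_inv]
    refine inv_mem (commutator_mem_commutator (commutator_mem_commutator h2 h3) ?_)
    rcases h1 with h | h
    · exact mem_sup_left h
    · exact mem_sup_right h
  have habs2 : ∀ u v w : G, u ∈ U → v ∈ V → (w ∈ U ∨ w ∈ V) → ⁅⁅u, v⁆, w⁆ ∈ T := by
    intro u v w h1 h2 h3
    refine habs (commutator_mem_commutator (commutator_mem_commutator h1 h2) ?_)
    rcases h3 with h | h
    · exact mem_sup_left h
    · exact mem_sup_right h
  -- left expansion
  have left : ∀ h ∈ V, (∀ p ∈ P, ⁅p, h⁆ ∈ T) → ∀ g ∈ Subgroup.closure P, ⁅g, h⁆ ∈ T := by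
    intro h hV hbase g hg
    induction hg using closure_induction with
    | mem x hx => exact hbase x hx
    | one => simpa using one_mem T
    | mul x y hx hy ihx ihy =>
      rw [comm_mul_left]
      exact mul_mem (mul_mem (habs1 x y h (Or.inl (hPU' hx)) (hPU' hy) hV) ihy) ihx
    | inv x hx ihx =>
      rw [comm_inv_left]
      exact mul_mem (inv_mem ihx) (habs2 x h x⁻¹ (hPU' hx) hV (Or.inl (inv_mem (hPU' hx))))
  intro g hg h hh
  induction hh using closure_induction with
  | mem q hq => exact left q (hQV hq) (fun p hp => hpq p hp q hq) g hg
  | one => simpa using one_mem T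
  | mul x y hx hy ihx ihy =>
    rw [comm_mul_right]
    exact mul_mem (mul_mem ihx (habs1 x g y (Or.inr (hQV' hx)) (hPU' hg) (hQV' hy))) ihy
  | inv x hx ihx =>
    rw [comm_inv_right]
    exact mul_mem (inv_mem ihx) (habs2 g x x⁻¹ (hPU' hg) (hQV' hx) (Or.inr (inv_mem (hQV' hx))))

end Expand


section Calc
variable {G : Type*} [Group G]

private lemma comm_mul_left' (g₁ g₂ h : G) :
    ⁅g₁ * g₂, h⁆ = ⁅g₁, ⁅g₂, h⁆⁆ * ⁅g₂, h⁆ * ⁅g₁, h⁆ := by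
  simp only [commutatorElement_def]; group

private lemma comm_inv_left' (g h : G) :
    ⁅g⁻¹, h⁆ = ⁅g, h⁆⁻¹ * ⁅⁅g, h⁆, g⁻¹⁆ := by
  simp only [commutatorElement_def]; group

private lemma comm_mul_right' (g h₁ h₂ : G) :
    ⁅g, h₁ * h₂⁆ = ⁅g, h₁⁆ * ⁅h₁, ⁅g, h₂⁆⁆ * ⁅g, h₂⁆ := by
  simp only [commutatorElement_def]; group

private lemma comm_inv_right' (g h : G) :
    ⁅g, h⁻¹⁆ = ⁅g, h⁆⁻¹ * ⁅⁅g, h⁆, h⁻¹⁆ := by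
  simp only [commutatorElement_def]; group

lemma mem_lcs_mono {g : G} {a b : ℕ} (h : b ≤ a) (hg : g ∈ (⊤ : Subgroup G).lowerCentralSeries a) :
    g ∈ (⊤ : Subgroup G).lowerCentralSeries b := Subgroup.lowerCentralSeries_antitone _ h hg

lemma comm_mem_lcs {g h : G} {k l : ℕ} (hg : g ∈ (⊤ : Subgroup G).lowerCentralSeries k)
    (hh : h ∈ (⊤ : Subgroup G).lowerCentralSeries l) : ⁅g, h⁆ ∈ (⊤ : Subgroup G).lowerCentralSeries (k + l + 1) :=
  lcs_comm_le G l k (commutator_mem_commutator hg hh)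

lemma comm_mem_lcs_any_right {g : G} (h : G) {k : ℕ} (hg : g ∈ (⊤ : Subgroup G).lowerCentralSeries k) :
    ⁅g, h⁆ ∈ (⊤ : Subgroup G).lowerCentralSeries (k + 1) := by
  have h0 : h ∈ (⊤ : Subgroup G).lowerCentralSeries 0 := Subgroup.mem_top h
  simpa using comm_mem_lcs hg h0

lemma comm_mem_lcs_any_left (g : G) {h : G} {k : ℕ} (hh : h ∈ (⊤ : Subgroup G).lowerCentralSeries k) :
    ⁅g, h⁆ ∈ (⊤ : Subgroup G).lowerCentralSeries (k + 1) := by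
  rw [← commutatorElement_inv]
  exact inv_mem (comm_mem_lcs_any_right g hh)

section T
variable {T : Subgroup G} {w : ℕ} (hT : (⊤ : Subgroup G).lowerCentralSeries w ≤ T)
include hT

/-- multiply a deep factor into the right slot. -/
lemma comm_T_mul_right {g h e : G} {k m : ℕ} (hg : g ∈ (⊤ : Subgroup G).lowerCentralSeries k)
    (he : e ∈ (⊤ : Subgroup G).lowerCentralSeries m) (hd : w ≤ k + m + 1)
    (h1 : ⁅g, h⁆ ∈ T) : ⁅g, h * e⁆ ∈ T := by
  rw [comm_mul_right']
  have h2 : ⁅g, e⁆ ∈ T := hT (mem_lcs_mono hd (comm_mem_lcs hg he))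
  have h3 : ⁅h, ⁅g, e⁆⁆ ∈ T := by
    refine hT (mem_lcs_mono ?_ (comm_mem_lcs_any_left h (comm_mem_lcs hg he)))
    omega
  exact mul_mem (mul_mem h1 h3) h2

/-- multiply a deep factor into the left slot. -/
lemma comm_T_mul_left {g h e : G} {l m : ℕ} (he : e ∈ (⊤ : Subgroup G).lowerCentralSeries m)
    (hh : h ∈ (⊤ : Subgroup G).lowerCentralSeries l) (hd : w ≤ m + l + 1)
    (h1 : ⁅g, h⁆ ∈ T) : ⁅g * e, h⁆ ∈ T := by
  rw [comm_mul_left']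
  have h2 : ⁅e, h⁆ ∈ T := hT (mem_lcs_mono hd (comm_mem_lcs he hh))
  have h3 : ⁅g, ⁅e, h⁆⁆ ∈ T := by
    refine hT (mem_lcs_mono ?_ (comm_mem_lcs_any_left g (comm_mem_lcs he hh)))
    omega
  exact mul_mem (mul_mem h3 h2) h1

lemma comm_T_inv_right {g h : G} {k l : ℕ} (hg : g ∈ (⊤ : Subgroup G).lowerCentralSeries k)
    (hh : h ∈ (⊤ : Subgroup G).lowerCentralSeries l) (hd : w ≤ k + l + 2)
    (h1 : ⁅g, h⁆ ∈ T) : ⁅g, h⁻¹⁆ ∈ T := by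
  rw [comm_inv_right']
  refine mul_mem (inv_mem h1) (hT (mem_lcs_mono ?_ (comm_mem_lcs (comm_mem_lcs hg hh) (inv_mem hh))))
  omega

lemma comm_T_inv_left {g h : G} {k l : ℕ} (hg : g ∈ (⊤ : Subgroup G).lowerCentralSeries k)
    (hh : h ∈ (⊤ : Subgroup G).lowerCentralSeries l) (hd : w ≤ k + l + 2)
    (h1 : ⁅g, h⁆ ∈ T) : ⁅g⁻¹, h⁆ ∈ T := by
  rw [comm_inv_left']
  refine mul_mem (inv_mem h1) (hT (mem_lcs_mono ?_ (comm_mem_lcs (comm_mem_lcs hg hh) (inv_mem hg))))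
  omega

/-- Graded Jacobi: `⁅⁅x,y⁆,z⁆` lies in `T` whenever `⁅⁅x,z⁆,y⁆` and `⁅x,⁅y,z⁆⁆` do,
modulo the `w`-th lower central series term. -/
theorem jacobi_mem {x y z : G} {pa qa sa : ℕ}
    (hx : x ∈ (⊤ : Subgroup G).lowerCentralSeries pa) (hy : y ∈ (⊤ : Subgroup G).lowerCentralSeries qa)
    (hz : z ∈ (⊤ : Subgroup G).lowerCentralSeries sa) (hw : w ≤ pa + qa + sa + 3)
    (H1 : ⁅⁅x, z⁆, y⁆ ∈ T) (H2 : ⁅x, ⁅y, z⁆⁆ ∈ T) : ⁅⁅x, y⁆, z⁆ ∈ T := by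
  have hu : ⁅z⁻¹, x⁻¹⁆ ∈ (⊤ : Subgroup G).lowerCentralSeries (sa + pa + 1) :=
    comm_mem_lcs (inv_mem hz) (inv_mem hx)
  have hD1mem : ⁅y, ⁅z⁻¹, x⁻¹⁆⁆ ∈ (⊤ : Subgroup G).lowerCentralSeries (pa + qa + sa + 2) := by
    refine mem_lcs_mono (le_of_eq (by omega)) (comm_mem_lcs hy hu)
  have hh' : ⁅y⁻¹, z⁆ ∈ (⊤ : Subgroup G).lowerCentralSeries (qa + sa + 1) :=
    comm_mem_lcs (inv_mem hy) hz
  have hD2mem : ⁅x⁻¹, ⁅y⁻¹, z⁆⁆ ∈ (⊤ : Subgroup G).lowerCentralSeries (pa + qa + sa + 2) := by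
    refine mem_lcs_mono (le_of_eq (by omega)) (comm_mem_lcs (inv_mem hx) hh')
  -- D1 ∈ T
  have hD1 : ⁅y, ⁅z⁻¹, x⁻¹⁆⁆ ∈ T := by
    have hid : ⁅z⁻¹, x⁻¹⁆ = ⁅z, x⁆ * ⁅⁅z, x⁆⁻¹, (x * z)⁻¹⁆ := by
      simp only [commutatorElement_def]; group
    rw [hid]
    have hv : ⁅z, x⁆ ∈ (⊤ : Subgroup G).lowerCentralSeries (sa + pa + 1) := comm_mem_lcs hz hx
    have he : ⁅⁅z, x⁆⁻¹, (x * z)⁻¹⁆ ∈ (⊤ : Subgroup G).lowerCentralSeries (sa + pa + 2) :=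
      comm_mem_lcs_any_right _ (inv_mem hv)
    refine comm_T_mul_right hT hy he (by omega) ?_
    have : ⁅z, x⁆ = ⁅x, z⁆⁻¹ := (commutatorElement_inv x z).symm
    rw [this]
    refine comm_T_inv_right hT hy (comm_mem_lcs hx hz) (by omega) ?_
    rw [← commutatorElement_inv]
    exact inv_mem H1
  -- D2 ∈ T
  have hD2 : ⁅x⁻¹, ⁅y⁻¹, z⁆⁆ ∈ T := by
    refine comm_T_inv_left hT hx hh' (by omega) ?_
    rw [comm_inv_left' y z]
    have hm : ⁅y, z⁆ ∈ (⊤ : Subgroup G).lowerCentralSeries (qa + sa + 1) := comm_mem_lcs hy hz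
    have hc : ⁅⁅y, z⁆, y⁻¹⁆ ∈ (⊤ : Subgroup G).lowerCentralSeries (qa + sa + 2) := by
      refine mem_lcs_mono ?_ (comm_mem_lcs hm (inv_mem hy)); omega
    refine comm_T_mul_right hT hx hc (by omega) ?_
    exact comm_T_inv_right hT hx hm (by omega) H2
  -- assemble via Hall–Witt
  rw [show ⁅⁅x, y⁆, z⁆ = ⁅z, ⁅x, y⁆⁆⁻¹ from (commutatorElement_inv z ⁅x, y⁆) ▸ rfl]
  refine inv_mem ?_
  have key : ⁅z, ⁅x, y⁆⁆ =
      ((x * z) * ⁅y, ⁅z⁻¹, x⁻¹⁆⁆⁻¹ * (x * z)⁻¹) * ((x * y) * ⁅x⁻¹, ⁅y⁻¹, z⁆⁆⁻¹ * (x * y)⁻¹) := by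
    simp only [commutatorElement_def]; group
  rw [key]
  have conj1 : (x * z) * ⁅y, ⁅z⁻¹, x⁻¹⁆⁆⁻¹ * (x * z)⁻¹ ∈ T := by
    have : (x * z) * ⁅y, ⁅z⁻¹, x⁻¹⁆⁆⁻¹ * (x * z)⁻¹ =
        ⁅(x * z), ⁅y, ⁅z⁻¹, x⁻¹⁆⁆⁻¹⁆ * ⁅y, ⁅z⁻¹, x⁻¹⁆⁆⁻¹ := by
      simp only [commutatorElement_def]; group
    rw [this]
    refine mul_mem (hT (mem_lcs_mono ?_ (comm_mem_lcs_any_left (x * z) (inv_mem hD1mem))))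
      (inv_mem hD1)
    omega
  have conj2 : (x * y) * ⁅x⁻¹, ⁅y⁻¹, z⁆⁆⁻¹ * (x * y)⁻¹ ∈ T := by
    have : (x * y) * ⁅x⁻¹, ⁅y⁻¹, z⁆⁆⁻¹ * (x * y)⁻¹ =
        ⁅(x * y), ⁅x⁻¹, ⁅y⁻¹, z⁆⁆⁻¹⁆ * ⁅x⁻¹, ⁅y⁻¹, z⁆⁆⁻¹ := by
      simp only [commutatorElement_def]; group
    rw [this]
    refine mul_mem (hT (mem_lcs_mono ?_ (comm_mem_lcs_any_left (x * y) (inv_mem hD2mem))))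
      (inv_mem hD2)
    omega
  exact mul_mem conj1 conj2

end T
end Calc

namespace FormalComm

/-- The list of leaves (generators) of a formal commutator. -/
def leaves {X : Type} : FormalComm X → List X
  | of x => [x]
  | comm b a => leaves b ++ leaves a

lemma weight_pos {X : Type} (c : FormalComm X) : 1 ≤ c.weight := by
  induction c with
  | of x => simp [weight]
  | comm b a ihb iha => simp only [weight]; omega

end FormalComm

section Trees

variable {X : Type}

/-- Trees of bounded weight with leaves in a finite set form a finite set. -/
lemma finite_trees (L : Finset X) (W : ℕ) :
    {c : FormalComm X | (∀ x ∈ c.leaves, x ∈ L) ∧ c.weight ≤ W}.Finite := by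
  induction W with
  | zero =>
    apply Set.Finite.subset Set.finite_empty
    rintro c ⟨-, hw⟩
    exact absurd hw (by have := c.weight_pos; omega)
  | succ W IH =>
    apply Set.Finite.subset
      ((L.finite_toSet.image FormalComm.of).union (Set.Finite.image2 FormalComm.comm IH IH))
    rintro c ⟨hl, hw⟩
    cases c with
    | of x =>
      exact Or.inl ⟨x, by simpa using hl x (by simp [FormalComm.leaves]), rfl⟩
    | comm b a =>
      have hwb := b.weight_pos
      have hwa := a.weight_pos
      have hw' : b.weight + a.weight ≤ W + 1 := hw
      refine Or.inr (Set.mem_image2_of_mem ⟨?_, by omega⟩ ⟨?_, by omega⟩)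
      · exact fun x hx => hl x (by simp [FormalComm.leaves, hx])
      · exact fun x hx => hl x (by simp [FormalComm.leaves, hx])

variable (r : FormalComm X → FormalComm X → Prop)

/-- Termination measure: the number of trees above `a` of bounded weight/leaves. -/
noncomputable def msr (L : Finset X) (w : ℕ) (a : FormalComm X) : ℕ :=
  Set.ncard {t : FormalComm X | (∀ x ∈ t.leaves, x ∈ L) ∧ t.weight ≤ w ∧ r a t}

variable (hr : IsStrictTotalOrder (FormalComm X) r)
include hr

lemma msr_lt (L : Finset X) (w : ℕ) {a a' : FormalComm X} (h : r a a')
    (hl : ∀ x ∈ a'.leaves, x ∈ L) (hw : a'.weight ≤ w) :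
    msr r L w a' < msr r L w a := by
  haveI := hr
  apply Set.ncard_lt_ncard
  · constructor
    · rintro t ⟨h1, h2, h3⟩
      exact ⟨h1, h2, _root_.trans_of r h h3⟩
    · intro hsub
      have : a' ∈ {t : FormalComm X | (∀ x ∈ t.leaves, x ∈ L) ∧ t.weight ≤ w ∧ r a t} :=
        ⟨hl, hw, h⟩
      exact absurd (hsub this).2.2 (irrefl_of r a')
  · apply Set.Finite.subset (finite_trees L w)
    rintro t ⟨h1, h2, -⟩
    exact ⟨h1, h2⟩

end Trees
section Collect

variable {X : Type}

lemma eval_mem_lcs (c : FormalComm X) :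
    c.eval ∈ (⊤ : Subgroup (FreeGroup X)).lowerCentralSeries (c.weight - 1) := by
  induction c with
  | of x => exact Subgroup.mem_top _
  | comm b a ihb iha =>
    have hb := b.weight_pos
    have ha := a.weight_pos
    have h := comm_mem_lcs ihb iha
    exact mem_lcs_mono (le_of_eq (by show (b.comm a).weight - 1 = _; simp [FormalComm.weight]; omega)) h

lemma eval_mem_lcs' {k : ℕ} (c : FormalComm X) (h : k + 1 ≤ c.weight) :
    c.eval ∈ (⊤ : Subgroup (FreeGroup X)).lowerCentralSeries k :=
  mem_lcs_mono (by omega) (eval_mem_lcs c)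

variable (r : FormalComm X → FormalComm X → Prop)

/-- basic commutators of weight exactly `w` with leaves in `L`, evaluated. -/
def BB (L : Finset X) (w : ℕ) : Set (FreeGroup X) :=
  {g | ∃ c : FormalComm X, FormalComm.IsBasic r c ∧ c.weight = w ∧
    (∀ x ∈ c.leaves, x ∈ L) ∧ c.eval = g}

variable (hr : IsStrictTotalOrder (FormalComm X) r)
    (hwt : ∀ a b : FormalComm X, a.weight < b.weight → r a b)
include hr hwt

lemma r_weight_le {a b : FormalComm X} (h : r a b) : a.weight ≤ b.weight := by
  haveI := hr
  by_contra h'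
  exact absurd (trans_of r h (hwt b a (by omega))) (irrefl_of r a)

theorem collect_aux (L : Finset X) : ∀ w k (b a : FormalComm X),
    FormalComm.IsBasic r b → FormalComm.IsBasic r a → r a b →
    (∀ x ∈ b.leaves, x ∈ L) → (∀ x ∈ a.leaves, x ∈ L) →
    b.weight + a.weight = w → msr r L w a ≤ k →
    ⁅b.eval, a.eval⁆ ∈ Subgroup.closure (BB r L w) ⊔ (⊤ : Subgroup (FreeGroup X)).lowerCentralSeries w := by
  haveI := hr
  intro w
  induction w using Nat.strong_induction_on with
  | _ w IHw =>
  intro k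
  induction k using Nat.strong_induction_on with
  | _ k IHk =>
  intro b a hb ha hab hbl hal hw hk
  set F := FreeGroup X
  set T : Subgroup F := Subgroup.closure (BB r L w) ⊔ (⊤ : Subgroup F).lowerCentralSeries w with hT
  have hTlcs : (⊤ : Subgroup F).lowerCentralSeries w ≤ T := le_sup_right
  have hwa := a.weight_pos
  have hwb := b.weight_pos
  -- the "good" case: the commutator is itself basic
  have good : (∀ b₁ b₂, b = FormalComm.comm b₁ b₂ → ¬ r a b₂) → ⁅b.eval, a.eval⁆ ∈ T := by
    intro hside
    have hbasic : FormalComm.IsBasic r (b.comm a) := FormalComm.IsBasic.comm b a hb ha hab hside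
    refine Subgroup.mem_sup_left (subset_closure ?_)
    refine ⟨b.comm a, hbasic, by simpa [FormalComm.weight] using hw, ?_, rfl⟩
    intro x hx
    rcases List.mem_append.mp (by simpa [FormalComm.leaves] using hx) with h | h
    · exact hbl x h
    · exact hal x h
  cases b with
  | of x => exact good (fun b₁ b₂ h => by cases h)
  | comm b₁ b₂ =>
    by_cases hab₂ : r a b₂
    · -- the bad case: rewrite using the Jacobi identity
      cases hb with
      | comm _ _ hb₁ hb₂ h21 hside =>
      have hw' : b₁.weight + b₂.weight + a.weight = w := by
        simpa [FormalComm.weight] using hw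
      have hw1 := b₁.weight_pos
      have hw2 := b₂.weight_pos
      have hrab₁ : r a b₁ := trans_of r hab₂ h21
      have hb₁l : ∀ x ∈ b₁.leaves, x ∈ L := fun x hx => hbl x (by simp [FormalComm.leaves, hx])
      have hb₂l : ∀ x ∈ b₂.leaves, x ∈ L := fun x hx => hbl x (by simp [FormalComm.leaves, hx])
      -- generic handler for pairs of basic commutators of total weight w
      have pair : ∀ c d : FormalComm X, FormalComm.IsBasic r c → FormalComm.IsBasic r d →
          (∀ x ∈ c.leaves, x ∈ L) → (∀ x ∈ d.leaves, x ∈ L) →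
          c.weight + d.weight = w → msr r L w c < k → msr r L w d < k →
          ⁅c.eval, d.eval⁆ ∈ T := by
        intro c d hc hd hcl hdl hwcd hkc hkd
        rcases trichotomous_of r c d with h | h | h
        · rw [show ⁅c.eval, d.eval⁆ = ⁅d.eval, c.eval⁆⁻¹ from (commutatorElement_inv _ _).symm]
          exact inv_mem (IHk (msr r L w c) hkc d c hd hc h hdl hcl (by omega) le_rfl)
        · rw [h, commutatorElement_self]; exact one_mem T
        · exact IHk (msr r L w d) hkd c d hc hd h hcl hdl hwcd le_rfl
      -- Step 1 : ⁅⁅b₁, a⁆, b₂⁆ ∈ T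
      have H1 : ⁅⁅b₁.eval, a.eval⁆, b₂.eval⁆ ∈ T := by
        set ps := b₁.weight + a.weight with hps
        have h1sub : ⁅b₁.eval, a.eval⁆ ∈
            Subgroup.closure (BB r L ps ∪ ↑((⊤ : Subgroup F).lowerCentralSeries ps)) := by
          rw [Subgroup.closure_union, Subgroup.closure_eq]
          exact IHw ps (by omega) (msr r L ps a) b₁ a hb₁ ha hrab₁ hb₁l hal rfl le_rfl
        refine comm_mem_of_closure (U := (⊤ : Subgroup F).lowerCentralSeries (ps - 1))
          (V := (⊤ : Subgroup F).lowerCentralSeries (b₂.weight - 1)) (T := T) ?_ ?_ ?_ ?_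
          _ h1sub _ (subset_closure (Set.mem_singleton b₂.eval))
        · rintro g (⟨c, hc, hcw, hcl, rfl⟩ | hg)
          · exact eval_mem_lcs' c (by omega)
          · exact mem_lcs_mono (by omega) hg
        · simp only [Set.singleton_subset_iff, SetLike.mem_coe]
          exact eval_mem_lcs b₂
        · have h1 : ⁅(⊤ : Subgroup F).lowerCentralSeries (ps - 1), (⊤ : Subgroup F).lowerCentralSeries (b₂.weight - 1)⁆ ≤
              (⊤ : Subgroup F).lowerCentralSeries (w - 1) :=
            (lcs_comm_le F _ _).trans (Subgroup.lowerCentralSeries_antitone _ (by omega))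
          calc ⁅⁅(⊤ : Subgroup F).lowerCentralSeries (ps - 1), (⊤ : Subgroup F).lowerCentralSeries (b₂.weight - 1)⁆,
                (⊤ : Subgroup F).lowerCentralSeries (ps - 1) ⊔ (⊤ : Subgroup F).lowerCentralSeries (b₂.weight - 1)⁆
              ≤ ⁅(⊤ : Subgroup F).lowerCentralSeries (w - 1), ⊤⁆ := commutator_mono h1 le_top
            _ = (⊤ : Subgroup F).lowerCentralSeries (w - 1 + 1) := rfl
            _ ≤ T := by rw [show w - 1 + 1 = w by omega]; exact hTlcs
        · rintro p' (⟨c, hc, hcw, hcl, rfl⟩ | hp') q' hq'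
          · rw [Set.mem_singleton_iff.mp hq']
            refine pair c b₂ hc hb₂ hcl hb₂l (by omega) ?_ ?_
            · refine lt_of_lt_of_le (msr_lt r hr L w ?_ hcl (by omega)) hk
              exact hwt a c (by omega)
            · exact lt_of_lt_of_le (msr_lt r hr L w hab₂ hb₂l (by omega)) hk
          · rw [Set.mem_singleton_iff.mp hq']
            refine hTlcs (mem_lcs_mono (by omega) (comm_mem_lcs hp' (eval_mem_lcs b₂)))
      -- Step 2 : ⁅b₁, ⁅b₂, a⁆⁆ ∈ T
      have H2 : ⁅b₁.eval, ⁅b₂.eval, a.eval⁆⁆ ∈ T := by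
        set qs := b₂.weight + a.weight with hqs
        have h2sub : ⁅b₂.eval, a.eval⁆ ∈
            Subgroup.closure (BB r L qs ∪ ↑((⊤ : Subgroup F).lowerCentralSeries qs)) := by
          rw [Subgroup.closure_union, Subgroup.closure_eq]
          exact IHw qs (by omega) (msr r L qs a) b₂ a hb₂ ha hab₂ hb₂l hal rfl le_rfl
        refine comm_mem_of_closure (U := (⊤ : Subgroup F).lowerCentralSeries (b₁.weight - 1))
          (V := (⊤ : Subgroup F).lowerCentralSeries (qs - 1)) (T := T) ?_ ?_ ?_ ?_
          _ (subset_closure (Set.mem_singleton b₁.eval)) _ h2sub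
        · simp only [Set.singleton_subset_iff, SetLike.mem_coe]
          exact eval_mem_lcs b₁
        · rintro g (⟨c, hc, hcw, hcl, rfl⟩ | hg)
          · exact eval_mem_lcs' c (by omega)
          · exact mem_lcs_mono (by omega) hg
        · have h1 : ⁅(⊤ : Subgroup F).lowerCentralSeries (b₁.weight - 1), (⊤ : Subgroup F).lowerCentralSeries (qs - 1)⁆ ≤
              (⊤ : Subgroup F).lowerCentralSeries (w - 1) :=
            (lcs_comm_le F _ _).trans (Subgroup.lowerCentralSeries_antitone _ (by omega))
          calc ⁅⁅(⊤ : Subgroup F).lowerCentralSeries (b₁.weight - 1), (⊤ : Subgroup F).lowerCentralSeries (qs - 1)⁆,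
                (⊤ : Subgroup F).lowerCentralSeries (b₁.weight - 1) ⊔ (⊤ : Subgroup F).lowerCentralSeries (qs - 1)⁆
              ≤ ⁅(⊤ : Subgroup F).lowerCentralSeries (w - 1), ⊤⁆ := commutator_mono h1 le_top
            _ = (⊤ : Subgroup F).lowerCentralSeries (w - 1 + 1) := rfl
            _ ≤ T := by rw [show w - 1 + 1 = w by omega]; exact hTlcs
        · rintro p' hp' q' (⟨d, hd, hdw, hdl, rfl⟩ | hq')
          · rw [Set.mem_singleton_iff.mp hp']
            refine pair b₁ d hb₁ hd hb₁l hdl (by omega) ?_ ?_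
            · exact lt_of_lt_of_le (msr_lt r hr L w hrab₁ hb₁l (by omega)) hk
            · refine lt_of_lt_of_le (msr_lt r hr L w ?_ hdl (by omega)) hk
              exact hwt a d (by omega)
          · rw [Set.mem_singleton_iff.mp hp']
            refine hTlcs (mem_lcs_mono (by omega) (comm_mem_lcs (eval_mem_lcs b₁) hq'))
      -- Step 3 : assemble by the graded Jacobi identity
      show ⁅⁅b₁.eval, b₂.eval⁆, a.eval⁆ ∈ T
      exact jacobi_mem hTlcs (eval_mem_lcs b₁) (eval_mem_lcs b₂) (eval_mem_lcs a)
        (by omega) H1 H2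
    · refine good ?_
      intro u v h
      injection h with h1 h2
      rw [← h2]
      exact hab₂

/-- The collection lemma: a commutator of two basic commutators is a product of
basic commutators of the same total weight, modulo deeper terms. -/
theorem collect (b a : FormalComm X) (hb : FormalComm.IsBasic r b) (ha : FormalComm.IsBasic r a) :
    ⁅b.eval, a.eval⁆ ∈ Subgroup.closure {g | ∃ c : FormalComm X, FormalComm.IsBasic r c ∧
      c.weight = b.weight + a.weight ∧ c.eval = g} ⊔
      (⊤ : Subgroup (FreeGroup X)).lowerCentralSeries (b.weight + a.weight) := by
  classical
  haveI := hr
  set L : Finset X := (b.leaves ++ a.leaves).toFinset with hL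
  have hbl : ∀ x ∈ b.leaves, x ∈ L := fun x hx => by simp [hL, hx]
  have hal : ∀ x ∈ a.leaves, x ∈ L := fun x hx => by simp [hL, hx]
  have mono : ∀ w : ℕ, Subgroup.closure (BB r L w) ⊔ (⊤ : Subgroup (FreeGroup X)).lowerCentralSeries w ≤
      Subgroup.closure {g | ∃ c : FormalComm X, FormalComm.IsBasic r c ∧
        c.weight = w ∧ c.eval = g} ⊔ (⊤ : Subgroup (FreeGroup X)).lowerCentralSeries w := by
    intro w
    refine sup_le_sup_right (Subgroup.closure_mono ?_) _
    rintro g ⟨c, hc, hcw, -, rfl⟩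
    exact ⟨c, hc, hcw, rfl⟩
  rcases trichotomous_of r a b with h | h | h
  · exact mono _ (collect_aux r hr hwt L _ (msr r L (b.weight + a.weight) a) b a hb ha h
      hbl hal rfl le_rfl)
  · rw [h, commutatorElement_self]; exact one_mem _
  · rw [show ⁅b.eval, a.eval⁆ = ⁅a.eval, b.eval⁆⁻¹ from (commutatorElement_inv _ _).symm]
    rw [show b.weight + a.weight = a.weight + b.weight from by omega]
    exact inv_mem (mono _ (collect_aux r hr hwt L _ (msr r L (a.weight + b.weight) b) a b ha hb h
      hal hbl rfl le_rfl))

end Collect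
section Final

variable {X : Type} (r : FormalComm X → FormalComm X → Prop)

/-- basic commutators of weight at least `w`, evaluated. -/
def BexGe (w : ℕ) : Set (FreeGroup X) :=
  {g | ∃ c : FormalComm X, FormalComm.IsBasic r c ∧ w ≤ c.weight ∧ c.eval = g}

variable (hr : IsStrictTotalOrder (FormalComm X) r)
    (hwt : ∀ a b : FormalComm X, a.weight < b.weight → r a b)
include hr hwt

/-- `γ_{m+1}/γ_{m+2}` is generated by basic commutators of weight `m+1`. -/
theorem core_gen (m : ℕ) : (⊤ : Subgroup (FreeGroup X)).lowerCentralSeries m ≤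
    Subgroup.closure {g | ∃ c : FormalComm X, FormalComm.IsBasic r c ∧
      c.weight = m + 1 ∧ c.eval = g} ⊔ (⊤ : Subgroup (FreeGroup X)).lowerCentralSeries (m + 1) := by
  set F := FreeGroup X
  induction m with
  | zero =>
    refine le_trans ?_ le_sup_left
    calc (⊤ : Subgroup F).lowerCentralSeries 0 = ⊤ := Subgroup.lowerCentralSeries_zero _
      _ = Subgroup.closure (Set.range (FreeGroup.of : X → F)) :=
        (FreeGroup.closure_range_of X).symm
      _ ≤ _ := by
        refine Subgroup.closure_mono ?_
        rintro g ⟨x, rfl⟩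
        exact ⟨FormalComm.of x, FormalComm.IsBasic.of x, rfl, rfl⟩
  | succ m IH =>
    set T : Subgroup F := Subgroup.closure {g | ∃ c : FormalComm X, FormalComm.IsBasic r c ∧
      c.weight = m + 2 ∧ c.eval = g} ⊔ (⊤ : Subgroup F).lowerCentralSeries (m + 2) with hTdef
    have hstep : (⊤ : Subgroup F).lowerCentralSeries (m + 1) = ⁅(⊤ : Subgroup F).lowerCentralSeries m, ⊤⁆ := rfl
    rw [hstep, commutator_le]
    intro g hg h hh
    have hG : g ∈ Subgroup.closure
        ({g | ∃ c : FormalComm X, FormalComm.IsBasic r c ∧ c.weight = m + 1 ∧ c.eval = g} ∪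
          ↑((⊤ : Subgroup F).lowerCentralSeries (m + 1))) := by
      rw [Subgroup.closure_union, Subgroup.closure_eq]
      exact IH hg
    have hH : h ∈ Subgroup.closure (Set.range (FreeGroup.of : X → F)) := by
      rw [FreeGroup.closure_range_of]; trivial
    refine comm_mem_of_closure (U := (⊤ : Subgroup F).lowerCentralSeries m) (V := (⊤ : Subgroup F).lowerCentralSeries 0)
      (T := T) ?_ ?_ ?_ ?_ g hG h hH
    · rintro g' (⟨c, hc, hcw, rfl⟩ | hg')
      · exact eval_mem_lcs' c (by omega)
      · exact mem_lcs_mono (by omega) hg'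
    · intro g' _
      exact Subgroup.mem_top g'
    · have h1 : ⁅(⊤ : Subgroup F).lowerCentralSeries m, (⊤ : Subgroup F).lowerCentralSeries 0⁆ ≤
          (⊤ : Subgroup F).lowerCentralSeries (m + 1) :=
        (lcs_comm_le F _ _).trans (Subgroup.lowerCentralSeries_antitone _ (by omega))
      calc ⁅⁅(⊤ : Subgroup F).lowerCentralSeries m, (⊤ : Subgroup F).lowerCentralSeries 0⁆,
            (⊤ : Subgroup F).lowerCentralSeries m ⊔ (⊤ : Subgroup F).lowerCentralSeries 0⁆
          ≤ ⁅(⊤ : Subgroup F).lowerCentralSeries (m + 1), ⊤⁆ := commutator_mono h1 le_top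
        _ = (⊤ : Subgroup F).lowerCentralSeries (m + 2) := rfl
        _ ≤ T := le_sup_right
    · rintro p (⟨c, hc, hcw, rfl⟩ | hp) q ⟨x, rfl⟩
      · have hcoll := collect r hr hwt c (FormalComm.of x) hc (FormalComm.IsBasic.of x)
        have hcw2 : c.weight + (FormalComm.of x).weight = m + 2 := by
          show c.weight + 1 = m + 2
          omega
        rw [hcw2] at hcoll
        exact hcoll
      · have h0 : FreeGroup.of x ∈ (⊤ : Subgroup F).lowerCentralSeries 0 := Subgroup.mem_top _
        exact Subgroup.mem_sup_right (mem_lcs_mono (by omega) (comm_mem_lcs hp h0))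

/-- Hall's generation theorem: `γ_{m+1}(F)` is generated by basic commutators of weight
at least `m+1` modulo any deeper term of the lower central series. -/
theorem hall_gen (M : ℕ) : ∀ t m : ℕ, M ≤ m + t →
    (⊤ : Subgroup (FreeGroup X)).lowerCentralSeries m ≤
      Subgroup.closure (BexGe r (m + 1)) ⊔ (⊤ : Subgroup (FreeGroup X)).lowerCentralSeries M := by
  intro t
  induction t with
  | zero =>
    intro m hM
    exact le_trans (Subgroup.lowerCentralSeries_antitone _ (by omega)) le_sup_right
  | succ t IH =>
    intro m hM
    by_cases hMm : M ≤ m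
    · exact le_trans (Subgroup.lowerCentralSeries_antitone _ hMm) le_sup_right
    · calc (⊤ : Subgroup (FreeGroup X)).lowerCentralSeries m
          ≤ Subgroup.closure {g | ∃ c : FormalComm X, FormalComm.IsBasic r c ∧
              c.weight = m + 1 ∧ c.eval = g} ⊔ (⊤ : Subgroup (FreeGroup X)).lowerCentralSeries (m + 1) :=
            core_gen r hr hwt m
        _ ≤ Subgroup.closure (BexGe r (m + 1)) ⊔
              (Subgroup.closure (BexGe r (m + 2)) ⊔ (⊤ : Subgroup (FreeGroup X)).lowerCentralSeries M) := by
            refine sup_le_sup (Subgroup.closure_mono ?_) (IH (m + 1) (by omega))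
            rintro g ⟨c, hc, hcw, rfl⟩
            exact ⟨c, hc, by omega, rfl⟩
        _ ≤ Subgroup.closure (BexGe r (m + 1)) ⊔ (⊤ : Subgroup (FreeGroup X)).lowerCentralSeries M := by
            rw [← sup_assoc]
            refine sup_le_sup_right (sup_le le_rfl (Subgroup.closure_mono ?_)) _
            rintro g ⟨c, hc, hcw, rfl⟩
            exact ⟨c, hc, by omega, rfl⟩

end Final


/-- Lemma 2.7(i): for a free group `F` on `X` and `n - 1 ≤ c₂ ≤ c₁`, the subgroup
`[γ_{c₁+n+1}(F), γ_{c₂+1}(F)]` is generated modulo `γ_{c₁+c₂+2n+2}(F)` by the commutators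
`[β,α]` with `β > α` basic, `wt(β) ≥ c₁+n+1`, `wt(α) ≥ c₂+1`, `wt(β)+wt(α) ≤ 2n+c₁+c₂+1`. -/
theorem commutator_gamma_generated_mod_gamma {X : Type}
    (r : FormalComm X → FormalComm X → Prop)
    (hr : IsStrictTotalOrder (FormalComm X) r)
    (hwt : ∀ a b : FormalComm X, a.weight < b.weight → r a b)
    (c₁ c₂ n : ℕ) (hc : c₂ ≤ c₁) (hc₂ : 1 ≤ c₂) (hn : 1 ≤ n) (hnc : n ≤ c₂ + 1) :
    let F := FreeGroup X
    let K : Subgroup F := (⊤ : Subgroup F).lowerCentralSeries (c₁ + c₂ + 2 * n + 1)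
    let S : Set F := {g | ∃ β α : FormalComm X,
      g = ⁅β.eval, α.eval⁆ ∧ FormalComm.IsBasic r β ∧ FormalComm.IsBasic r α ∧ r α β ∧
      c₁ + n + 1 ≤ β.weight ∧ c₂ + 1 ≤ α.weight ∧
      β.weight + α.weight ≤ 2 * n + c₁ + c₂ + 1}
    ⁅(⊤ : Subgroup F).lowerCentralSeries (c₁ + n), (⊤ : Subgroup F).lowerCentralSeries c₂⁆ ⊔ K =
      Subgroup.closure S ⊔ K := by
  intro F K S
  apply le_antisymm
  · refine sup_le ?_ le_sup_right
    rw [commutator_le]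
    intro g hg h hh
    have hG : g ∈ Subgroup.closure
        (BexGe r (c₁ + n + 1) ∪ ↑((⊤ : Subgroup F).lowerCentralSeries (c₁ + 2 * n))) := by
      rw [Subgroup.closure_union, Subgroup.closure_eq]
      exact hall_gen r hr hwt (c₁ + 2 * n) n (c₁ + n) (by omega) hg
    have hH : h ∈ Subgroup.closure
        (BexGe r (c₂ + 1) ∪ ↑((⊤ : Subgroup F).lowerCentralSeries (c₂ + n))) := by
      rw [Subgroup.closure_union, Subgroup.closure_eq]
      exact hall_gen r hr hwt (c₂ + n) n c₂ (by omega) hh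
    refine comm_mem_of_closure (U := (⊤ : Subgroup F).lowerCentralSeries (c₁ + n))
      (V := (⊤ : Subgroup F).lowerCentralSeries c₂) (T := Subgroup.closure S ⊔ K) ?_ ?_ ?_ ?_ g hG h hH
    · rintro g' (⟨β, hβ, hβw, rfl⟩ | hg')
      · exact eval_mem_lcs' β (by omega)
      · exact mem_lcs_mono (by omega) hg'
    · rintro h' (⟨α, hα, hαw, rfl⟩ | hh')
      · exact eval_mem_lcs' α (by omega)
      · exact mem_lcs_mono (by omega) hh'
    · have h1 : ⁅(⊤ : Subgroup F).lowerCentralSeries (c₁ + n), (⊤ : Subgroup F).lowerCentralSeries c₂⁆ ≤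
          (⊤ : Subgroup F).lowerCentralSeries (c₁ + n + c₂ + 1) := lcs_comm_le F _ _
      calc ⁅⁅(⊤ : Subgroup F).lowerCentralSeries (c₁ + n), (⊤ : Subgroup F).lowerCentralSeries c₂⁆,
            (⊤ : Subgroup F).lowerCentralSeries (c₁ + n) ⊔ (⊤ : Subgroup F).lowerCentralSeries c₂⁆
          ≤ ⁅(⊤ : Subgroup F).lowerCentralSeries (c₁ + n + c₂ + 1), (⊤ : Subgroup F).lowerCentralSeries c₂⁆ :=
            commutator_mono h1 (sup_le (Subgroup.lowerCentralSeries_antitone _ (by omega)) le_rfl)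
        _ ≤ (⊤ : Subgroup F).lowerCentralSeries (c₁ + n + c₂ + 1 + c₂ + 1) := lcs_comm_le F _ _
        _ ≤ K := Subgroup.lowerCentralSeries_antitone _ (by omega)
        _ ≤ Subgroup.closure S ⊔ K := le_sup_right
    · rintro p (⟨β, hβ, hβw, rfl⟩ | hp) q (⟨α, hα, hαw, rfl⟩ | hq)
      · by_cases hbig : c₁ + c₂ + 2 * n + 2 ≤ β.weight + α.weight
        · have h1 := β.weight_pos
          have h2 := α.weight_pos
          refine Subgroup.mem_sup_right (mem_lcs_mono (by omega)
            (comm_mem_lcs (eval_mem_lcs β) (eval_mem_lcs α)))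
        · refine Subgroup.mem_sup_left (subset_closure ?_)
          exact ⟨β, α, rfl, hβ, hα, hwt α β (by omega), by omega, by omega, by omega⟩
      · refine Subgroup.mem_sup_right (mem_lcs_mono (by omega)
          (comm_mem_lcs (eval_mem_lcs' β (show c₁ + n + 1 ≤ β.weight by omega)) hq))
      · refine Subgroup.mem_sup_right (mem_lcs_mono (by omega)
          (comm_mem_lcs hp (eval_mem_lcs' α (show c₂ + 1 ≤ α.weight by omega))))
      · exact Subgroup.mem_sup_right (mem_lcs_mono (by omega) (comm_mem_lcs hp hq))
  · refine sup_le ((Subgroup.closure_le _).mpr ?_) le_sup_right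
    rintro g ⟨β, α, rfl, hβ, hα, -, hβw, hαw, -⟩
    exact Subgroup.mem_sup_left (commutator_mem_commutator
      (eval_mem_lcs' β (by omega)) (eval_mem_lcs' α (by omega)))
end
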